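/- arXiv:2108.09097 — 7 statements merged into one kernel-verified Lean document; each statement's English description precedes it below -/
import Mathlib

section
/- Let H be a bialgebra over a commutative ring R and let τ : H → H be an R-linear involution that is an algebra morphism and is either a coalgebra morphism or a coalgebra antimorphism. Let p_1, …, p_k ∈ H be primitive elements with τ(p_i) = p_i for all i. Then for every integer a ≥ 1, the symmetrised product v := Σ_{σ ∈ S_k} p_{σ(1)}⋯p_{σ(k)} satisfies Ψ_a^+(v) = (a·1_R)^k · v and Ψ_a^−(v) = (a·1_R)^k · v. -/
open TensorProduct

/-- Convolution product `f * g := m ∘ (f ⊗ g) ∘ Δ` of linear endomorphisms of a bialgebra. -/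
noncomputable def convProd {R H : Type*} [CommRing R] [Ring H] [Bialgebra R H]
    (f g : H →ₗ[R] H) : H →ₗ[R] H :=
  LinearMap.mul' R H ∘ₗ TensorProduct.map f g ∘ₗ Coalgebra.comul

/-- `PsiAux τ n = (Ψ_{n+1}^+, Ψ_{n+1}^−)`: the hyperoctahedral riffle-shuffle operators,
defined by `Ψ_1^+ = id`, `Ψ_1^− = τ`, `Ψ_{a+1}^+ = id * Ψ_a^−`, `Ψ_{a+1}^− = τ * Ψ_a^+`. -/
noncomputable def PsiAux {R H : Type*} [CommRing R] [Ring H] [Bialgebra R H]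
    (τ : H →ₗ[R] H) : ℕ → (H →ₗ[R] H) × (H →ₗ[R] H)
  | 0 => (LinearMap.id, τ)
  | n + 1 => (convProd LinearMap.id (PsiAux τ n).2, convProd τ (PsiAux τ n).1)

/-- The operator `Ψ_a^+` (for `a ≥ 1`). -/
noncomputable def PsiPlus {R H : Type*} [CommRing R] [Ring H] [Bialgebra R H]
    (τ : H →ₗ[R] H) (a : ℕ) : H →ₗ[R] H := (PsiAux τ (a - 1)).1

/-- The operator `Ψ_a^−` (for `a ≥ 1`). -/
noncomputable def PsiMinus {R H : Type*} [CommRing R] [Ring H] [Bialgebra R H]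
    (τ : H →ₗ[R] H) (a : ℕ) : H →ₗ[R] H := (PsiAux τ (a - 1)).2

/-- `p` is a primitive element: `Δ p = 1 ⊗ p + p ⊗ 1`. -/
def IsPrimitive (R : Type*) {H : Type*} [CommRing R] [Ring H] [Bialgebra R H] (p : H) : Prop :=
  Coalgebra.comul (R := R) p = 1 ⊗ₜ[R] p + p ⊗ₜ[R] 1

/-- `τ` is a coalgebra morphism: `Δ ∘ τ = (τ ⊗ τ) ∘ Δ` and `ε ∘ τ = ε`. -/
def IsCoalgMorph {R H : Type*} [CommRing R] [Ring H] [Bialgebra R H] (τ : H →ₗ[R] H) : Prop :=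
  Coalgebra.comul ∘ₗ τ = TensorProduct.map τ τ ∘ₗ (Coalgebra.comul : H →ₗ[R] H ⊗[R] H) ∧
    Coalgebra.counit ∘ₗ τ = (Coalgebra.counit : H →ₗ[R] R)

/-- `τ` is a coalgebra antimorphism: `Δ ∘ τ = swap ∘ (τ ⊗ τ) ∘ Δ` and `ε ∘ τ = ε`. -/
def IsCoalgAntimorph {R H : Type*} [CommRing R] [Ring H] [Bialgebra R H] (τ : H →ₗ[R] H) : Prop :=
  Coalgebra.comul ∘ₗ τ =
      (TensorProduct.comm R H H).toLinearMap ∘ₗ TensorProduct.map τ τ ∘ₗ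
        (Coalgebra.comul : H →ₗ[R] H ⊗[R] H) ∧
    Coalgebra.counit ∘ₗ τ = (Coalgebra.counit : H →ₗ[R] R)

set_option linter.unusedSectionVars false

section Aux
variable {R H : Type*} [CommRing R] [Ring H] [Bialgebra R H]

lemma tau_list_prod (τ : H →ₗ[R] H) (halg1 : τ 1 = 1)
    (halgmul : ∀ x y : H, τ (x * y) = τ x * τ y) :
    ∀ L : List H, τ L.prod = (L.map τ).prod := by
  intro L
  induction L with
  | nil => simpa using halg1
  | cons h t ih => simp [halgmul, ih]

def pifProd {m : ℕ} (q : Fin m → H) (c : Fin m → Bool) : H :=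
  (List.ofFn fun i => if c i then q i else 1).prod

lemma pifProd_eq_filter {m : ℕ} (q : Fin m → H) (c : Fin m → Bool) :
    pifProd q c = (((List.finRange m).filter c).map q).prod := by
  rw [pifProd, List.ofFn_eq_map]
  induction (List.finRange m) with
  | nil => rfl
  | cons h t ih =>
      rcases hc : c h with hh | hh
      · simpa [List.filter_cons, hc] using ih
      · simpa [List.filter_cons, hc] using congrArg (q h * ·) ih

lemma pifProd_cons {m : ℕ} (q : Fin (m+1) → H) (b : Bool) (c : Fin m → Bool) :
    pifProd q (Fin.cons b c) =
      (if b then q 0 else 1) * pifProd (fun i => q i.succ) c := by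
  rw [pifProd, List.ofFn_succ, List.prod_cons]
  simp [pifProd]

lemma not_cons (m : ℕ) (b : Bool) (c : Fin m → Bool) :
    (fun i => !((Fin.cons b c : Fin (m+1) → Bool) i)) = Fin.cons (!b) (fun i => !(c i)) := by
  funext i
  refine Fin.cases ?_ ?_ i <;> simp

lemma comul_ofFn_prod {m : ℕ} (q : Fin m → H) (hq : ∀ i, IsPrimitive R (q i)) :
    Coalgebra.comul (R := R) ((List.ofFn q).prod) =
      ∑ c : Fin m → Bool, pifProd q c ⊗ₜ[R] pifProd q (fun i => !(c i)) := by
  induction m with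
  | zero =>
      simp [pifProd, Algebra.TensorProduct.one_def]
  | succ m ih =>
      rw [List.ofFn_succ, List.prod_cons, Bialgebra.comul_mul, hq 0,
        ih (fun i => q i.succ) (fun i => hq i.succ)]
      have e1 : ∑ c : Fin (m+1) → Bool, pifProd q c ⊗ₜ[R] pifProd q (fun i => !(c i))
          = ∑ bc : Bool × (Fin m → Bool),
            pifProd q (Fin.cons bc.1 bc.2) ⊗ₜ[R]
              pifProd q (Fin.cons (!bc.1) (fun i => !(bc.2 i))) := by
        refine (Fintype.sum_equiv (Fin.consEquiv fun _ => Bool)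
          (fun bc : Bool × (Fin m → Bool) =>
            pifProd q (Fin.cons bc.1 bc.2) ⊗ₜ[R]
              pifProd q (Fin.cons (!bc.1) (fun i => !(bc.2 i))))
          (fun c : Fin (m+1) → Bool => pifProd q c ⊗ₜ[R] pifProd q (fun i => !(c i))) ?_).symm
        rintro ⟨b, c⟩
        have h1 : ((Fin.consEquiv fun _ => Bool) (b, c) : Fin (m+1) → Bool) = Fin.cons b c := rfl
        dsimp only
        rw [h1, not_cons]
      rw [e1]
      simp only [Fintype.sum_prod_type, Fintype.sum_bool]
      simp only [pifProd_cons, reduceIte, Bool.false_eq_true, if_false,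
        Bool.not_true, Bool.not_false, one_mul]
      rw [add_mul, Finset.mul_sum, Finset.mul_sum, ← Finset.sum_add_distrib,
        ← Finset.sum_add_distrib]
      refine Finset.sum_congr rfl fun c _ => ?_
      rw [Algebra.TensorProduct.tmul_mul_tmul, Algebra.TensorProduct.tmul_mul_tmul,
        one_mul, one_mul, add_comm]

lemma sum_bool_pow (r : R) : ∀ m : ℕ,
    ∑ c : Fin m → Bool, r ^ (m - ((List.finRange m).filter c).length) = (1 + r) ^ m := by
  intro m
  induction m with
  | zero => simp
  | succ m ih =>
      rw [← (Fintype.sum_equiv (Fin.consEquiv fun _ => Bool)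
        (fun bc : Bool × (Fin m → Bool) =>
          r ^ (m + 1 - ((List.finRange (m+1)).filter (Fin.cons bc.1 bc.2)).length))
        (fun c : Fin (m+1) → Bool => r ^ (m + 1 - ((List.finRange (m+1)).filter c).length))
        (fun bc => rfl))]
      have key : ∀ (b : Bool) (c : Fin m → Bool),
          ((List.finRange (m+1)).filter (Fin.cons b c)).length
            = (if b then 1 else 0) + ((List.finRange m).filter c).length := by
        intro b c
        rw [List.finRange_succ, List.filter_cons, List.filter_map]
        have : ((Fin.cons b c : Fin (m+1) → Bool) ∘ Fin.succ) = c := by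
          funext i; simp
        rw [this]
        cases b <;> simp [Nat.add_comm]
      rw [Fintype.sum_prod_type, Fintype.sum_bool]
      simp only [key, reduceIte, Bool.false_eq_true, if_false, if_true, zero_add]
      have hle : ∀ c : Fin m → Bool, ((List.finRange m).filter c).length ≤ m := by
        intro c
        simpa using List.length_filter_le c (List.finRange m)
      have e2 : ∀ c : Fin m → Bool,
          r ^ (m + 1 - (1 + ((List.finRange m).filter c).length))
            = r ^ (m - ((List.finRange m).filter c).length) := by
        intro c; congr 1; omega
      have e3 : ∀ c : Fin m → Bool,
          r ^ (m + 1 - ((List.finRange m).filter c).length)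
            = r * r ^ (m - ((List.finRange m).filter c).length) := by
        intro c
        have : m + 1 - ((List.finRange m).filter c).length
            = (m - ((List.finRange m).filter c).length) + 1 := by
          have := hle c; omega
        rw [this, pow_succ]; ring
      simp only [e2, e3]
      rw [← Finset.sum_add_distrib]
      have : ∀ c : Fin m → Bool,
          r ^ (m - ((List.finRange m).filter c).length)
            + r * r ^ (m - ((List.finRange m).filter c).length)
          = (1 + r) * r ^ (m - ((List.finRange m).filter c).length) := by
        intro c; ring
      simp only [this]
      rw [← Finset.mul_sum, ih, pow_succ]
      ring

lemma map_get_map {α β : Type*} (w : α → β) (φ : β → H) (l : List α) :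
    (l.map w).map φ = l.map (fun t => φ (w t)) := by
  rw [List.map_map]; rfl

lemma conv_step {k : ℕ} (τ f g : H →ₗ[R] H) (c₀ : R)
    (halg1 : τ 1 = 1)
    (hf : ∀ L : List H, (∀ x ∈ L, τ x = x) → f L.prod = L.prod)
    (hg : ∀ j, j ≤ k → ∀ (p : Fin k → H), (∀ i, IsPrimitive R (p i)) → (∀ i, τ (p i) = p i) →
      (∑ σ : Equiv.Perm (Fin k),
          (((List.finRange k).take j).map (fun i => p (σ i))).prod *
            g ((((List.finRange k).drop j).map (fun i => p (σ i))).prod))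
        = c₀ ^ (k - j) • ∑ σ : Equiv.Perm (Fin k), ((List.finRange k).map (fun i => p (σ i))).prod)
    (p : Fin k → H) (hp : ∀ i, IsPrimitive R (p i)) (hfix : ∀ i, τ (p i) = p i)
    (j : ℕ) (hj : j ≤ k) :
    (∑ σ : Equiv.Perm (Fin k),
        (((List.finRange k).take j).map (fun i => p (σ i))).prod *
          (convProd f g) ((((List.finRange k).drop j).map (fun i => p (σ i))).prod))
      = (1 + c₀) ^ (k - j) •
          ∑ σ : Equiv.Perm (Fin k), ((List.finRange k).map (fun i => p (σ i))).prod := by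
  set D : List (Fin k) := (List.finRange k).drop j with hD
  have hDlen : D.length = k - j := by simp [hD]
  have hconv : ∀ σ : Equiv.Perm (Fin k),
      (convProd f g) ((D.map (fun i => p (σ i))).prod)
        = ∑ c : Fin D.length → Bool,
            pifProd (fun t => p (σ (D.get t))) c *
              g (pifProd (fun t => p (σ (D.get t))) (fun t => !(c t))) := by
    intro σ
    have h0 : (D.map (fun i => p (σ i))).prod
        = (List.ofFn (fun t => p (σ (D.get t)))).prod := by
      conv_lhs => rw [← List.map_get_finRange D]
      rw [List.map_map, List.ofFn_eq_map]
      rfl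
    rw [h0, convProd]
    simp only [LinearMap.coe_comp, Function.comp_apply]
    rw [comul_ofFn_prod _ (fun t => hp _), map_sum, map_sum]
    refine Finset.sum_congr rfl fun c _ => ?_
    rw [TensorProduct.map_tmul, LinearMap.mul'_apply]
    congr 1
    refine hf _ ?_
    intro x hx
    rw [List.mem_ofFn] at hx
    obtain ⟨t, rfl⟩ := hx
    rcases hc : c t with h | h <;> simp [hc, halg1, hfix]
  simp only [hconv]
  rw [Finset.sum_congr rfl
    (fun σ _ => Finset.mul_sum (Finset.univ : Finset (Fin D.length → Bool))
      _ ((((List.finRange k).take j).map (fun i => p (σ i))).prod))]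
  rw [Finset.sum_comm]
  have key : ∀ c : Fin D.length → Bool,
      (∑ σ : Equiv.Perm (Fin k),
        (((List.finRange k).take j).map (fun i => p (σ i))).prod *
          (pifProd (fun t => p (σ (D.get t))) c *
            g (pifProd (fun t => p (σ (D.get t))) (fun t => !(c t)))))
      = c₀ ^ ((k - j) - ((List.finRange D.length).filter c).length) •
          ∑ σ : Equiv.Perm (Fin k), ((List.finRange k).map (fun i => p (σ i))).prod := by
    intro c
    set jc := ((List.finRange D.length).filter c).length with hjc
    have hjcle : jc ≤ D.length := by
      rw [hjc]; simpa using List.length_filter_le c (List.finRange D.length)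
    set Sc : List (Fin k) := ((List.finRange D.length).filter c).map D.get with hSc
    set Sc' : List (Fin k) :=
      ((List.finRange D.length).filter (fun t => !(c t))).map D.get with hSc'
    set L₁ : List (Fin k) := ((List.finRange k).take j ++ Sc) ++ Sc' with hL₁
    have hperm : L₁.Perm (List.finRange k) := by
      have h1 : (Sc ++ Sc').Perm D := by
        rw [hSc, hSc', ← List.map_append]
        have h2 := (List.filter_append_perm (fun t => c t) (List.finRange D.length)).map D.get
        simpa [List.map_get_finRange] using h2
      have h3 : L₁.Perm ((List.finRange k).take j ++ (Sc ++ Sc')) := by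
        rw [hL₁, List.append_assoc]
      refine h3.trans ?_
      have h4 := h1.append_left ((List.finRange k).take j)
      refine h4.trans ?_
      rw [hD, List.take_append_drop]
    have hlen : L₁.length = k := by
      rw [hperm.length_eq, List.length_finRange]
    have hnd : L₁.Nodup := hperm.nodup_iff.mpr (List.nodup_finRange k)
    set w : Fin k → Fin k := fun t => L₁.get (Fin.cast hlen.symm t) with hw
    have hwinj : Function.Injective w := by
      intro a b hab
      have := List.nodup_iff_injective_get.mp hnd hab
      exact Fin.ext (by simpa [Fin.coe_cast] using congrArg Fin.val this)
    set u : Equiv.Perm (Fin k) := Equiv.ofBijective w (Finite.injective_iff_bijective.mp hwinj)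
      with hu
    have hmapw : (List.finRange k).map w = L₁ := by
      refine List.ext_getElem (by simp [hlen]) ?_
      intro i h1 h2
      simp [hw, List.getElem_map, List.getElem_finRange, List.get_eq_getElem]
    have hlentake : ((List.finRange k).take j ++ Sc).length = j + jc := by
      rw [List.length_append, List.length_take, List.length_finRange, min_eq_left hj,
        hSc, List.length_map, hjc]
    have htake : L₁.take (j + jc) = (List.finRange k).take j ++ Sc := by
      rw [hL₁]; exact List.take_left' hlentake
    have hdrop : L₁.drop (j + jc) = Sc' := by
      rw [hL₁]; exact List.drop_left' hlentake
    have hterm : ∀ σ : Equiv.Perm (Fin k),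
        (((List.finRange k).take j).map (fun i => p (σ i))).prod *
          (pifProd (fun t => p (σ (D.get t))) c *
            g (pifProd (fun t => p (σ (D.get t))) (fun t => !(c t))))
        = (((List.finRange k).take (j + jc)).map (fun i => p ((σ * u) i))).prod *
            g ((((List.finRange k).drop (j + jc)).map (fun i => p ((σ * u) i))).prod) := by
      intro σ
      have hpc : pifProd (fun t => p (σ (D.get t))) c = (Sc.map (fun i => p (σ i))).prod := by
        rw [pifProd_eq_filter, hSc, map_get_map]
      have hpc' : pifProd (fun t => p (σ (D.get t))) (fun t => !(c t))
          = (Sc'.map (fun i => p (σ i))).prod := by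
        rw [pifProd_eq_filter, hSc', map_get_map]
      have h5 : (fun i => p ((σ * u) i)) = fun t => p (σ (w t)) := rfl
      have hw2 : ((List.finRange k).take (j + jc)).map (fun i => p ((σ * u) i))
          = (L₁.take (j + jc)).map (fun i => p (σ i)) := by
        rw [h5, ← map_get_map w (fun i => p (σ i)), List.map_take, hmapw]
      have hw3 : ((List.finRange k).drop (j + jc)).map (fun i => p ((σ * u) i))
          = (L₁.drop (j + jc)).map (fun i => p (σ i)) := by
        rw [h5, ← map_get_map w (fun i => p (σ i)), List.map_drop, hmapw]
      have hhead : (((List.finRange k).take j).map (fun i => p (σ i))).prod *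
            (Sc.map (fun i => p (σ i))).prod
          = (((List.finRange k).take (j + jc)).map (fun i => p ((σ * u) i))).prod := by
        rw [hw2, htake, List.map_append, List.prod_append]
      have htail : (Sc'.map (fun i => p (σ i))).prod
          = (((List.finRange k).drop (j + jc)).map (fun i => p ((σ * u) i))).prod := by
        rw [hw3, hdrop]
      rw [hpc, hpc', ← mul_assoc, hhead, htail]
    simp only [hterm]
    rw [Fintype.sum_equiv (Equiv.mulRight u)
      (fun σ : Equiv.Perm (Fin k) =>
        (((List.finRange k).take (j + jc)).map (fun i => p ((σ * u) i))).prod *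
          g ((((List.finRange k).drop (j + jc)).map (fun i => p ((σ * u) i))).prod))
      (fun σ : Equiv.Perm (Fin k) =>
        (((List.finRange k).take (j + jc)).map (fun i => p (σ i))).prod *
          g ((((List.finRange k).drop (j + jc)).map (fun i => p (σ i))).prod))
      (fun σ => rfl)]
    have hjk : j + jc ≤ k := by
      have h1 := hjcle
      have h2 := hDlen
      omega
    rw [hg (j + jc) hjk p hp hfix, Nat.sub_add_eq]
  simp only [key]
  rw [← Finset.sum_smul, ← hDlen, sum_bool_pow]

lemma claim_main (τ : H →ₗ[R] H) (halg1 : τ 1 = 1)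
    (halgmul : ∀ x y : H, τ (x * y) = τ x * τ y) (n : ℕ) :
    ∀ (k : ℕ) (p : Fin k → H), (∀ i, IsPrimitive R (p i)) → (∀ i, τ (p i) = p i) →
    ∀ j, j ≤ k →
    ((∑ σ : Equiv.Perm (Fin k),
        (((List.finRange k).take j).map (fun i => p (σ i))).prod *
          (PsiAux τ n).1 ((((List.finRange k).drop j).map (fun i => p (σ i))).prod))
      = ((n+1 : ℕ) : R) ^ (k - j) •
          ∑ σ : Equiv.Perm (Fin k), ((List.finRange k).map (fun i => p (σ i))).prod)
    ∧ ((∑ σ : Equiv.Perm (Fin k),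
        (((List.finRange k).take j).map (fun i => p (σ i))).prod *
          (PsiAux τ n).2 ((((List.finRange k).drop j).map (fun i => p (σ i))).prod))
      = ((n+1 : ℕ) : R) ^ (k - j) •
          ∑ σ : Equiv.Perm (Fin k), ((List.finRange k).map (fun i => p (σ i))).prod) := by
  induction n with
  | zero =>
      intro k p hp hfix j hj
      have hfixprod : ∀ (σ : Equiv.Perm (Fin k)) (L : List (Fin k)),
          τ ((L.map (fun i => p (σ i))).prod) = (L.map (fun i => p (σ i))).prod := by
        intro σ L
        rw [tau_list_prod τ halg1 halgmul, map_get_map]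
        congr 1
        exact List.map_congr_left (fun i _ => hfix (σ i))
      have hcoe : ((0 + 1 : ℕ) : R) = 1 := by norm_num
      rw [hcoe, one_pow, one_smul]
      constructor
      · refine Finset.sum_congr rfl fun σ _ => ?_
        show _ * LinearMap.id _ = _
        rw [LinearMap.id_apply, ← List.prod_append, ← List.map_append, List.take_append_drop]
      · refine Finset.sum_congr rfl fun σ _ => ?_
        show _ * τ _ = _
        rw [hfixprod, ← List.prod_append, ← List.map_append, List.take_append_drop]
  | succ n ih =>
      intro k p hp hfix j hj
      have hcoe : (1 : R) + ((n + 1 : ℕ) : R) = ((n + 1 + 1 : ℕ) : R) := by push_cast; ring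
      constructor
      · show (∑ σ : Equiv.Perm (Fin k),
            (((List.finRange k).take j).map (fun i => p (σ i))).prod *
              (convProd LinearMap.id (PsiAux τ n).2)
                ((((List.finRange k).drop j).map (fun i => p (σ i))).prod)) = _
        rw [conv_step τ LinearMap.id ((PsiAux τ n).2) ((n+1 : ℕ) : R) halg1
          (fun L _ => rfl)
          (fun j' hj' p' hp' hfix' => (ih k p' hp' hfix' j' hj').2)
          p hp hfix j hj, hcoe]
      · show (∑ σ : Equiv.Perm (Fin k),
            (((List.finRange k).take j).map (fun i => p (σ i))).prod *
              (convProd τ (PsiAux τ n).1)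
                ((((List.finRange k).drop j).map (fun i => p (σ i))).prod)) = _
        rw [conv_step τ τ ((PsiAux τ n).1) ((n+1 : ℕ) : R) halg1
          (fun L hL => by
            rw [tau_list_prod τ halg1 halgmul]
            congr 1
            exact (List.map_congr_left hL).trans (List.map_id L))
          (fun j' hj' p' hp' hfix' => (ih k p' hp' hfix' j' hj').1)
          p hp hfix j hj, hcoe]

end Aux

/-- if `τ` is a linear involution on a bialgebra `H` that is an algebra morphism
and a coalgebra (anti)morphism, and `p_1, …, p_k` are `τ`-invariant primitives, then the
symmetrised product `v = Σ_{σ ∈ S_k} p_{σ(1)}⋯p_{σ(k)}` satisfies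
`Ψ_a^+(v) = (a·1_R)^k • v` and `Ψ_a^−(v) = (a·1_R)^k • v` for every `a ≥ 1`. -/
theorem symmetrised_product_eigenvector_of_algebra_morphism
    {R H : Type*} [CommRing R] [Ring H] [Bialgebra R H]
    (τ : H →ₗ[R] H)
    (hinv : ∀ x, τ (τ x) = x)
    (halg1 : τ 1 = 1) (halgmul : ∀ x y : H, τ (x * y) = τ x * τ y)
    (hco : IsCoalgMorph τ ∨ IsCoalgAntimorph τ)
    (k : ℕ) (p : Fin k → H)
    (hprim : ∀ i, IsPrimitive R (p i))
    (hfix : ∀ i, τ (p i) = p i)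
    (a : ℕ) (ha : 1 ≤ a) :
    PsiPlus τ a (∑ σ : Equiv.Perm (Fin k), (List.ofFn fun i => p (σ i)).prod) =
        ((a : R)) ^ k • (∑ σ : Equiv.Perm (Fin k), (List.ofFn fun i => p (σ i)).prod) ∧
    PsiMinus τ a (∑ σ : Equiv.Perm (Fin k), (List.ofFn fun i => p (σ i)).prod) =
        ((a : R)) ^ k • (∑ σ : Equiv.Perm (Fin k), (List.ofFn fun i => p (σ i)).prod) := by
  obtain ⟨b, rfl⟩ : ∃ b, a = b + 1 := ⟨a - 1, by omega⟩
  have h := claim_main τ halg1 halgmul b k p hprim hfix 0 (Nat.zero_le k)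
  simp only [List.take_zero, List.drop_zero, List.map_nil, List.prod_nil, one_mul,
    Nat.sub_zero] at h
  have hPP : PsiPlus τ (b + 1) = (PsiAux τ b).1 := by
    rw [PsiPlus, Nat.add_sub_cancel]
  have hPM : PsiMinus τ (b + 1) = (PsiAux τ b).2 := by
    rw [PsiMinus, Nat.add_sub_cancel]
  simp only [hPP, hPM, List.ofFn_eq_map, map_sum]
  exact h
end

section
/- Let H be a bialgebra over a commutative ring R and let τ : H → H be an R-linear involution that is an algebra antimorphism and is either a coalgebra morphism or a coalgebra antimorphism. Let p̄ ∈ H be primitive with τ(p̄) = −p̄, and let s = p_1⋯p_m be any product of primitive elements of H (m ≥ 0; s = 1 when m = 0). Then for every odd integer a ≥ 1: Ψ_a^+(p̄ s) = p̄ · Ψ_a^+(s), Ψ_a^+(s p̄) = Ψ_a^+(s) · p̄, Ψ_a^−(p̄ s) = −Ψ_a^−(s) · p̄, and Ψ_a^−(s p̄) = −p̄ · Ψ_a^−(s). -/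
open TensorProduct

section AuxHyperoct

variable {R H : Type*} [CommRing R] [Ring H] [Bialgebra R H]

/-- `s` is a product of primitive elements. -/
def PPrim (R : Type*) {H : Type*} [CommRing R] [Ring H] [Bialgebra R H] (s : H) : Prop :=
  ∃ l : List H, (∀ p ∈ l, IsPrimitive R p) ∧ l.prod = s

lemma PPrim.one : PPrim R (1 : H) := ⟨[], by simp, rfl⟩

lemma PPrim.cons {p s : H} (hp : IsPrimitive R p) (hs : PPrim R s) : PPrim R (p * s) := by
  obtain ⟨l, hl, rfl⟩ := hs
  refine ⟨p :: l, ?_, List.prod_cons⟩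
  intro q hq
  rcases List.mem_cons.1 hq with rfl | hq
  exacts [hp, hl q hq]

/-- The set of pure tensors of products of primitives. -/
def TsetPrim (R H : Type*) [CommRing R] [Ring H] [Bialgebra R H] : Set (H ⊗[R] H) :=
  {z | ∃ x y : H, PPrim R x ∧ PPrim R y ∧ z = x ⊗ₜ[R] y}

lemma mul_left_mem_span_prim {p : H} (hp : IsPrimitive R p) :
    ∀ w ∈ Submodule.span R (TsetPrim R H),
      (1 ⊗ₜ[R] p + p ⊗ₜ[R] 1) * w ∈ Submodule.span R (TsetPrim R H) := by
  intro w hw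
  induction hw using Submodule.span_induction with
  | mem z hz =>
    obtain ⟨x, y, hx, hy, rfl⟩ := hz
    rw [add_mul, Algebra.TensorProduct.tmul_mul_tmul, Algebra.TensorProduct.tmul_mul_tmul,
      one_mul]
    exact Submodule.add_mem _
      (Submodule.subset_span ⟨x, p * y, hx, PPrim.cons hp hy, rfl⟩)
      (Submodule.subset_span ⟨p * x, y, PPrim.cons hp hx, hy, by rw [one_mul]⟩)
  | zero => rw [mul_zero]; exact Submodule.zero_mem _
  | add u v hu hv ihu ihv => rw [mul_add]; exact Submodule.add_mem _ ihu ihv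
  | smul r u hu ihu => rw [mul_smul_comm]; exact Submodule.smul_mem _ r ihu

lemma comul_mem_span_prim {s : H} (hs : PPrim R s) :
    Coalgebra.comul (R := R) s ∈ Submodule.span R (TsetPrim R H) := by
  obtain ⟨l, hl, rfl⟩ := hs
  induction l with
  | nil =>
    simp only [List.prod_nil, Bialgebra.comul_one]
    exact Submodule.subset_span ⟨1, 1, PPrim.one, PPrim.one, Algebra.TensorProduct.one_def⟩
  | cons p t ih =>
    rw [List.prod_cons, Bialgebra.comul_mul, hl p List.mem_cons_self]
    exact mul_left_mem_span_prim (hl p List.mem_cons_self) _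
      (ih fun q hq => hl q (List.mem_cons_of_mem p hq))

lemma conv_pbar_left (f g E : H →ₗ[R] H) {pbar : H} (hp : IsPrimitive R pbar)
    (hgen : ∀ x y : H, PPrim R x → PPrim R y →
      f x * g (pbar * y) + f (pbar * x) * g y = E (f x * g y))
    {s : H} (hs : PPrim R s) :
    convProd f g (pbar * s) = E (convProd f g s) := by
  have key : ∀ w ∈ Submodule.span R (TsetPrim R H),
      LinearMap.mul' R H (TensorProduct.map f g ((1 ⊗ₜ[R] pbar + pbar ⊗ₜ[R] 1) * w)) =
        E (LinearMap.mul' R H (TensorProduct.map f g w)) := by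
    intro w hw
    induction hw using Submodule.span_induction with
    | mem z hz =>
      obtain ⟨x, y, hx, hy, rfl⟩ := hz
      rw [add_mul, Algebra.TensorProduct.tmul_mul_tmul, Algebra.TensorProduct.tmul_mul_tmul,
        one_mul, one_mul, map_add, TensorProduct.map_tmul, TensorProduct.map_tmul,
        TensorProduct.map_tmul, map_add, LinearMap.mul'_apply, LinearMap.mul'_apply,
        LinearMap.mul'_apply]
      exact hgen x y hx hy
    | zero => simp
    | add u v hu hv ihu ihv =>
      rw [mul_add, map_add, map_add, ihu, ihv, map_add, map_add, map_add]
    | smul r u hu ihu =>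
      rw [mul_smul_comm, map_smul, map_smul, ihu, map_smul, map_smul, map_smul]
  have h1 : Coalgebra.comul (R := R) (pbar * s) =
      (1 ⊗ₜ[R] pbar + pbar ⊗ₜ[R] 1) * Coalgebra.comul (R := R) s := by
    rw [Bialgebra.comul_mul, hp]
  simp only [convProd, LinearMap.comp_apply, h1]
  exact key _ (comul_mem_span_prim hs)

lemma conv_pbar_right (f g E : H →ₗ[R] H) {pbar : H} (hp : IsPrimitive R pbar)
    (hgen : ∀ x y : H, PPrim R x → PPrim R y →
      f x * g (y * pbar) + f (x * pbar) * g y = E (f x * g y))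
    {s : H} (hs : PPrim R s) :
    convProd f g (s * pbar) = E (convProd f g s) := by
  have key : ∀ w ∈ Submodule.span R (TsetPrim R H),
      LinearMap.mul' R H (TensorProduct.map f g (w * (1 ⊗ₜ[R] pbar + pbar ⊗ₜ[R] 1))) =
        E (LinearMap.mul' R H (TensorProduct.map f g w)) := by
    intro w hw
    induction hw using Submodule.span_induction with
    | mem z hz =>
      obtain ⟨x, y, hx, hy, rfl⟩ := hz
      rw [mul_add, Algebra.TensorProduct.tmul_mul_tmul, Algebra.TensorProduct.tmul_mul_tmul,
        mul_one, mul_one, map_add, TensorProduct.map_tmul, TensorProduct.map_tmul,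
        TensorProduct.map_tmul, map_add, LinearMap.mul'_apply, LinearMap.mul'_apply,
        LinearMap.mul'_apply]
      exact hgen x y hx hy
    | zero => simp
    | add u v hu hv ihu ihv =>
      rw [add_mul, map_add, map_add, ihu, ihv, map_add, map_add, map_add]
    | smul r u hu ihu =>
      rw [smul_mul_assoc, map_smul, map_smul, ihu, map_smul, map_smul, map_smul]
  have h1 : Coalgebra.comul (R := R) (s * pbar) =
      Coalgebra.comul (R := R) s * (1 ⊗ₜ[R] pbar + pbar ⊗ₜ[R] 1) := by
    rw [Bialgebra.comul_mul, hp]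
  simp only [convProd, LinearMap.comp_apply, h1]
  exact key _ (comul_mem_span_prim hs)

lemma psiAux_key (τ : H →ₗ[R] H)
    (halgmul : ∀ x y : H, τ (x * y) = τ y * τ x)
    {pbar : H} (hpbar : IsPrimitive R pbar) (hneg : τ pbar = -pbar) :
    ∀ n : ℕ,
      (Even n → ∀ s : H, PPrim R s →
        (PsiAux τ n).1 (pbar * s) = pbar * (PsiAux τ n).1 s ∧
        (PsiAux τ n).1 (s * pbar) = (PsiAux τ n).1 s * pbar ∧
        (PsiAux τ n).2 (pbar * s) = -((PsiAux τ n).2 s * pbar) ∧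
        (PsiAux τ n).2 (s * pbar) = -(pbar * (PsiAux τ n).2 s)) ∧
      (¬ Even n → ∀ s : H, PPrim R s →
        (PsiAux τ n).1 (pbar * s) = pbar * (PsiAux τ n).1 s - (PsiAux τ n).1 s * pbar ∧
        (PsiAux τ n).1 (s * pbar) = 0 ∧
        (PsiAux τ n).2 (pbar * s) = 0 ∧
        (PsiAux τ n).2 (s * pbar) = (PsiAux τ n).2 s * pbar - pbar * (PsiAux τ n).2 s) := by
  intro n
  induction n with
  | zero =>
    refine ⟨fun _ s _ => ⟨rfl, rfl, ?_, ?_⟩, fun h => absurd Even.zero h⟩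
    · show τ (pbar * s) = -(τ s * pbar)
      rw [halgmul, hneg, mul_neg]
    · show τ (s * pbar) = -(pbar * τ s)
      rw [halgmul, hneg, neg_mul]
  | succ n ih =>
    constructor
    · intro hev s hs
      have hodd : ¬ Even n := by rwa [Nat.even_add_one] at hev
      have IH := ih.2 hodd
      refine ⟨?_, ?_, ?_, ?_⟩ <;> simp only [PsiAux]
      · have h := conv_pbar_left LinearMap.id (PsiAux τ n).2 (LinearMap.mulLeft R pbar) hpbar
          (fun x y hx hy => by
            obtain ⟨h1, h2, h3, h4⟩ := IH y hy
            simp only [LinearMap.id_apply, h3, LinearMap.mulLeft_apply]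
            noncomm_ring) hs
        simpa only [LinearMap.mulLeft_apply] using h
      · have h := conv_pbar_right LinearMap.id (PsiAux τ n).2 (LinearMap.mulRight R pbar) hpbar
          (fun x y hx hy => by
            obtain ⟨h1, h2, h3, h4⟩ := IH y hy
            simp only [LinearMap.id_apply, h4, LinearMap.mulRight_apply]
            noncomm_ring) hs
        simpa only [LinearMap.mulRight_apply] using h
      · have h := conv_pbar_left τ (PsiAux τ n).1 (-LinearMap.mulRight R pbar) hpbar
          (fun x y hx hy => by
            obtain ⟨h1, h2, h3, h4⟩ := IH y hy
            simp only [h1, halgmul, hneg, LinearMap.neg_apply, LinearMap.mulRight_apply]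
            noncomm_ring) hs
        simpa only [LinearMap.neg_apply, LinearMap.mulRight_apply] using h
      · have h := conv_pbar_right τ (PsiAux τ n).1 (-LinearMap.mulLeft R pbar) hpbar
          (fun x y hx hy => by
            obtain ⟨h1, h2, h3, h4⟩ := IH y hy
            simp only [h2, halgmul, hneg, LinearMap.neg_apply, LinearMap.mulLeft_apply]
            noncomm_ring) hs
        simpa only [LinearMap.neg_apply, LinearMap.mulLeft_apply] using h
    · intro hnev s hs
      have heven : Even n := by rwa [Nat.even_add_one, not_not] at hnev
      have IH := ih.1 heven
      refine ⟨?_, ?_, ?_, ?_⟩ <;> simp only [PsiAux]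
      · have h := conv_pbar_left LinearMap.id (PsiAux τ n).2
          (LinearMap.mulLeft R pbar - LinearMap.mulRight R pbar) hpbar
          (fun x y hx hy => by
            obtain ⟨h1, h2, h3, h4⟩ := IH y hy
            simp only [LinearMap.id_apply, h3, LinearMap.sub_apply, LinearMap.mulLeft_apply,
              LinearMap.mulRight_apply]
            noncomm_ring) hs
        simpa only [LinearMap.sub_apply, LinearMap.mulLeft_apply, LinearMap.mulRight_apply]
          using h
      · have h := conv_pbar_right LinearMap.id (PsiAux τ n).2 (0 : H →ₗ[R] H) hpbar
          (fun x y hx hy => by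
            obtain ⟨h1, h2, h3, h4⟩ := IH y hy
            simp only [LinearMap.id_apply, h4, LinearMap.zero_apply]
            noncomm_ring) hs
        simpa only [LinearMap.zero_apply] using h
      · have h := conv_pbar_left τ (PsiAux τ n).1 (0 : H →ₗ[R] H) hpbar
          (fun x y hx hy => by
            obtain ⟨h1, h2, h3, h4⟩ := IH y hy
            simp only [h1, halgmul, hneg, LinearMap.zero_apply]
            noncomm_ring) hs
        simpa only [LinearMap.zero_apply] using h
      · have h := conv_pbar_right τ (PsiAux τ n).1
          (LinearMap.mulRight R pbar - LinearMap.mulLeft R pbar) hpbar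
          (fun x y hx hy => by
            obtain ⟨h1, h2, h3, h4⟩ := IH y hy
            simp only [h2, halgmul, hneg, LinearMap.sub_apply, LinearMap.mulLeft_apply,
              LinearMap.mulRight_apply]
            noncomm_ring) hs
        simpa only [LinearMap.sub_apply, LinearMap.mulLeft_apply, LinearMap.mulRight_apply]
          using h

end AuxHyperoct

/-- if `τ` is a linear involution on a bialgebra `H` that is an algebra
antimorphism and a coalgebra (anti)morphism, `p̄` is a primitive with `τ(p̄) = −p̄`, and
`s = p_1⋯p_m` is any product of primitives, then for every odd `a ≥ 1`:
`Ψ_a^+(p̄s) = p̄·Ψ_a^+(s)`, `Ψ_a^+(sp̄) = Ψ_a^+(s)·p̄`,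
`Ψ_a^−(p̄s) = −Ψ_a^−(s)·p̄`, `Ψ_a^−(sp̄) = −p̄·Ψ_a^−(s)`. -/
theorem negating_primitive_commutation_antimorphism_odd
    {R H : Type*} [CommRing R] [Ring H] [Bialgebra R H]
    (τ : H →ₗ[R] H)
    (hinv : ∀ x, τ (τ x) = x)
    (halg1 : τ 1 = 1) (halgmul : ∀ x y : H, τ (x * y) = τ y * τ x)
    (hco : IsCoalgMorph τ ∨ IsCoalgAntimorph τ)
    (pbar : H) (hpbar : IsPrimitive R pbar) (hneg : τ pbar = -pbar)
    (m : ℕ) (q : Fin m → H) (hq : ∀ i, IsPrimitive R (q i))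
    (a : ℕ) (ha : 1 ≤ a) (haodd : Odd a) :
    PsiPlus τ a (pbar * (List.ofFn q).prod) = pbar * PsiPlus τ a ((List.ofFn q).prod) ∧
    PsiPlus τ a ((List.ofFn q).prod * pbar) = PsiPlus τ a ((List.ofFn q).prod) * pbar ∧
    PsiMinus τ a (pbar * (List.ofFn q).prod) = -(PsiMinus τ a ((List.ofFn q).prod) * pbar) ∧
    PsiMinus τ a ((List.ofFn q).prod * pbar) = -(pbar * PsiMinus τ a ((List.ofFn q).prod)) := by

  obtain ⟨k, hk⟩ := haodd
  have hn : Even (a - 1) := ⟨k, by omega⟩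
  have hs : PPrim R ((List.ofFn q).prod) := by
    refine ⟨List.ofFn q, ?_, rfl⟩
    intro p hp
    obtain ⟨i, rfl⟩ := List.mem_ofFn.1 hp
    exact hq i
  exact psiAux_key τ halgmul hpbar hneg (a - 1) |>.1 hn _ hs
end

section
/- Let H be a bialgebra over a commutative ring R and let τ : H → H be an R-linear involution that is an algebra antimorphism and is either a coalgebra morphism or a coalgebra antimorphism. Let p̄ ∈ H be primitive with τ(p̄) = −p̄, and let s = p_1⋯p_m be any product of primitive elements of H (m ≥ 0; s = 1 when m = 0). Then for every even integer a ≥ 2: Ψ_a^+(s p̄) = 0 and Ψ_a^−(p̄ s) = 0. -/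
open TensorProduct

section Aux

variable {R H : Type*} [CommRing R] [Ring H] [Bialgebra R H]

lemma comul_mul_pbar (pbar x : H) (hpbar : IsPrimitive R pbar) :
    Coalgebra.comul (R := R) (x * pbar)
      = Coalgebra.comul (R := R) x * (1 ⊗ₜ[R] pbar + pbar ⊗ₜ[R] 1) := by
  rw [Bialgebra.comul_mul, hpbar]

lemma comul_pbar_mul (pbar x : H) (hpbar : IsPrimitive R pbar) :
    Coalgebra.comul (R := R) (pbar * x)
      = (1 ⊗ₜ[R] pbar + pbar ⊗ₜ[R] 1) * Coalgebra.comul (R := R) x := by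
  rw [Bialgebra.comul_mul, hpbar]

lemma aux_r0 (f g : H →ₗ[R] H) (pbar : H)
    (hf : ∀ y, f (y * pbar) = f y * pbar)
    (hg : ∀ z, g (z * pbar) = -(pbar * g z)) (t : H ⊗[R] H) :
    LinearMap.mul' R H
      (TensorProduct.map f g (t * (1 ⊗ₜ[R] pbar + pbar ⊗ₜ[R] 1))) = 0 := by
  induction t using TensorProduct.induction_on with
  | zero => simp
  | tmul y z =>
      simp only [mul_add, Algebra.TensorProduct.tmul_mul_tmul, mul_one, one_mul,
        map_add, TensorProduct.map_tmul, LinearMap.mul'_apply, hf, hg]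
      rw [mul_neg, mul_assoc, neg_add_cancel]
  | add t₁ t₂ h₁ h₂ =>
      rw [add_mul, map_add, map_add, h₁, h₂, add_zero]

lemma aux_r1 (f g : H →ₗ[R] H) (pbar : H)
    (hf : ∀ y, f (y * pbar) = -(pbar * f y))
    (hg : ∀ z, g (z * pbar) = 0) (t : H ⊗[R] H) :
    LinearMap.mul' R H
      (TensorProduct.map f g (t * (1 ⊗ₜ[R] pbar + pbar ⊗ₜ[R] 1)))
      = -(pbar * LinearMap.mul' R H (TensorProduct.map f g t)) := by
  induction t using TensorProduct.induction_on with
  | zero => simp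
  | tmul y z =>
      simp only [mul_add, Algebra.TensorProduct.tmul_mul_tmul, mul_one, one_mul,
        map_add, TensorProduct.map_tmul, LinearMap.mul'_apply, hf, hg]
      rw [mul_zero, zero_add, neg_mul, mul_assoc]
  | add t₁ t₂ h₁ h₂ =>
      rw [add_mul, map_add, map_add, h₁, h₂, map_add, map_add, mul_add, neg_add]

lemma aux_l0 (f g : H →ₗ[R] H) (pbar : H)
    (hf : ∀ y, f (pbar * y) = -(f y * pbar))
    (hg : ∀ z, g (pbar * z) = pbar * g z) (t : H ⊗[R] H) :
    LinearMap.mul' R H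
      (TensorProduct.map f g ((1 ⊗ₜ[R] pbar + pbar ⊗ₜ[R] 1) * t)) = 0 := by
  induction t using TensorProduct.induction_on with
  | zero => simp
  | tmul y z =>
      simp only [add_mul, Algebra.TensorProduct.tmul_mul_tmul, mul_one, one_mul,
        map_add, TensorProduct.map_tmul, LinearMap.mul'_apply, hf, hg]
      rw [neg_mul, mul_assoc, add_neg_cancel]
  | add t₁ t₂ h₁ h₂ =>
      rw [mul_add, map_add, map_add, h₁, h₂, add_zero]

lemma aux_l1 (f g : H →ₗ[R] H) (pbar : H)
    (hf : ∀ y, f (pbar * y) = pbar * f y)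
    (hg : ∀ z, g (pbar * z) = 0) (t : H ⊗[R] H) :
    LinearMap.mul' R H
      (TensorProduct.map f g ((1 ⊗ₜ[R] pbar + pbar ⊗ₜ[R] 1) * t))
      = pbar * LinearMap.mul' R H (TensorProduct.map f g t) := by
  induction t using TensorProduct.induction_on with
  | zero => simp
  | tmul y z =>
      simp only [add_mul, Algebra.TensorProduct.tmul_mul_tmul, mul_one, one_mul,
        map_add, TensorProduct.map_tmul, LinearMap.mul'_apply, hf, hg]
      rw [mul_zero, zero_add, mul_assoc]
  | add t₁ t₂ h₁ h₂ =>
      rw [mul_add, map_add, map_add, h₁, h₂, map_add, map_add, mul_add]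

lemma convProd_apply (f g : H →ₗ[R] H) (x : H) :
    convProd f g x = LinearMap.mul' R H (TensorProduct.map f g (Coalgebra.comul x)) := rfl

lemma psi_key (τ : H →ₗ[R] H)
    (halgmul : ∀ x y : H, τ (x * y) = τ y * τ x)
    (pbar : H) (hpbar : IsPrimitive R pbar) (hneg : τ pbar = -pbar) :
    ∀ n : ℕ,
      (Even n → (∀ x, (PsiAux τ n).2 (x * pbar) = -(pbar * (PsiAux τ n).2 x)) ∧
                (∀ x, (PsiAux τ n).1 (pbar * x) = pbar * (PsiAux τ n).1 x)) ∧
      (¬ Even n → (∀ x, (PsiAux τ n).1 (x * pbar) = 0) ∧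
                  (∀ x, (PsiAux τ n).2 (pbar * x) = 0)) := by
  have hτr : ∀ y, τ (y * pbar) = -(pbar * τ y) := by
    intro y; rw [halgmul, hneg, neg_mul]
  have hτl : ∀ y, τ (pbar * y) = -(τ y * pbar) := by
    intro y; rw [halgmul, hneg, mul_neg]
  intro n
  induction n with
  | zero =>
      refine ⟨fun _ => ⟨hτr, fun x => rfl⟩, fun h => absurd Even.zero h⟩
  | succ n ih =>
      by_cases hn : Even n
      · obtain ⟨hA, hB⟩ := ih.1 hn
        refine ⟨fun h => absurd hn (by simpa [Nat.even_add_one] using h), fun _ => ?_⟩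
        constructor
        · intro x
          show convProd LinearMap.id (PsiAux τ n).2 (x * pbar) = 0
          rw [convProd_apply, comul_mul_pbar pbar x hpbar]
          exact aux_r0 _ _ pbar (fun y => rfl) hA _
        · intro x
          show convProd τ (PsiAux τ n).1 (pbar * x) = 0
          rw [convProd_apply, comul_pbar_mul pbar x hpbar]
          exact aux_l0 _ _ pbar hτl hB _
      · obtain ⟨hC, hD⟩ := ih.2 hn
        refine ⟨fun _ => ?_, fun h => absurd (by simpa [Nat.even_add_one] using hn) h⟩
        constructor
        · intro x
          show convProd τ (PsiAux τ n).1 (x * pbar)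
              = -(pbar * convProd τ (PsiAux τ n).1 x)
          rw [convProd_apply, convProd_apply, comul_mul_pbar pbar x hpbar]
          exact aux_r1 _ _ pbar hτr hC _
        · intro x
          show convProd LinearMap.id (PsiAux τ n).2 (pbar * x)
              = pbar * convProd LinearMap.id (PsiAux τ n).2 x
          rw [convProd_apply, convProd_apply, comul_pbar_mul pbar x hpbar]
          exact aux_l1 _ _ pbar (fun y => rfl) hD _

end Aux

/-- if `τ` is a linear involution on a bialgebra `H` that is an algebra
antimorphism and a coalgebra (anti)morphism, `p̄` is a primitive with `τ(p̄) = −p̄`, and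
`s = p_1⋯p_m` is any product of primitives, then for every even `a ≥ 2`:
`Ψ_a^+(sp̄) = 0` and `Ψ_a^−(p̄s) = 0`. -/
theorem negating_primitive_annihilation_antimorphism_even
    {R H : Type*} [CommRing R] [Ring H] [Bialgebra R H]
    (τ : H →ₗ[R] H)
    (hinv : ∀ x, τ (τ x) = x)
    (halg1 : τ 1 = 1) (halgmul : ∀ x y : H, τ (x * y) = τ y * τ x)
    (hco : IsCoalgMorph τ ∨ IsCoalgAntimorph τ)
    (pbar : H) (hpbar : IsPrimitive R pbar) (hneg : τ pbar = -pbar)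
    (m : ℕ) (q : Fin m → H) (hq : ∀ i, IsPrimitive R (q i))
    (a : ℕ) (ha : 2 ≤ a) (haeven : Even a) :
    PsiPlus τ a ((List.ofFn q).prod * pbar) = 0 ∧
    PsiMinus τ a (pbar * (List.ofFn q).prod) = 0 := by
  have hodd : ¬ Even (a - 1) := by
    rcases haeven with ⟨j, hj⟩
    rintro ⟨k, hk⟩
    omega
  obtain ⟨hC, hD⟩ := (psi_key τ halgmul pbar hpbar hneg (a - 1)).2 hodd
  exact ⟨hC _, hD _⟩
end

section
/- Let H be a bialgebra over a commutative ring R and let τ : H → H be an R-linear involution that is an algebra morphism and is either a coalgebra morphism or a coalgebra antimorphism. Let p̄ ∈ H be primitive with τ(p̄) = −p̄, and let s = p_1⋯p_m be any product of primitive elements of H (m ≥ 0; s = 1 when m = 0). Then for every odd integer a ≥ 1: Ψ_a^+(p̄ s + s p̄) = p̄ · Ψ_a^+(s) + Ψ_a^+(s) · p̄ and Ψ_a^−(p̄ s + s p̄) = −p̄ · Ψ_a^−(s) − Ψ_a^−(s) · p̄. -/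
open TensorProduct

section Aux
variable {R H : Type*} [CommRing R] [Ring H] [Bialgebra R H]

def IsPrimProd (R : Type*) {H : Type*} [CommRing R] [Ring H] [Bialgebra R H] (s : H) : Prop :=
  ∃ l : List H, (∀ p ∈ l, IsPrimitive R p) ∧ l.prod = s

noncomputable def Mset (R H : Type*) [CommRing R] [Ring H] [Bialgebra R H] :
    Submodule R (H ⊗[R] H) :=
  Submodule.span R {x | ∃ u v, IsPrimProd R v ∧ x = u ⊗ₜ[R] v}

lemma comul_mem_Mset {s : H} (hs : IsPrimProd R s) :
    Coalgebra.comul (R := R) s ∈ Mset R H := by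
  obtain ⟨l, hl, rfl⟩ := hs
  induction l with
  | nil =>
      simp only [List.prod_nil, Bialgebra.comul_one]
      exact Submodule.subset_span ⟨1, 1, ⟨[], by simp, by simp⟩, by
        simp [Algebra.TensorProduct.one_def]⟩
  | cons p t ih =>
      have hp : IsPrimitive R p := hl p (by simp)
      have ht := ih (fun q hq => hl q (by simp [hq]))
      rw [List.prod_cons, Bialgebra.comul_mul, hp]
      set c := Coalgebra.comul (R := R) t.prod with hc
      refine Submodule.span_induction (p := fun c _ => (1 ⊗ₜ[R] p + p ⊗ₜ[R] 1) * c ∈ Mset R H)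
        ?_ ?_ ?_ ?_ ht
      · rintro x ⟨u, v, hv, rfl⟩
        rw [add_mul, Algebra.TensorProduct.tmul_mul_tmul, Algebra.TensorProduct.tmul_mul_tmul,
          one_mul, one_mul]
        refine Submodule.add_mem _ ?_ ?_
        · obtain ⟨lv, hlv, rfl⟩ := hv
          exact Submodule.subset_span ⟨u, p * lv.prod,
            ⟨p :: lv, by simp only [List.mem_cons]; rintro q (rfl | hq); exacts [hp, hlv q hq], by simp⟩, rfl⟩
        · exact Submodule.subset_span ⟨p * u, v, hv, rfl⟩
      · simp
      · intro x y _ _ hx hy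
        rw [mul_add]; exact Submodule.add_mem _ hx hy
      · intro r x _ hx
        rw [mul_smul_comm]; exact Submodule.smul_mem _ _ hx
end Aux

section Aux2
variable {R H : Type*} [CommRing R] [Ring H] [Bialgebra R H]

lemma eq_on_Mset (Φ Ψ : H ⊗[R] H →ₗ[R] H)
    (h : ∀ u v, IsPrimProd R v → Φ (u ⊗ₜ[R] v) = Ψ (u ⊗ₜ[R] v))
    {c : H ⊗[R] H} (hc : c ∈ Mset R H) : Φ c = Ψ c := by
  refine Submodule.span_induction ?_ (by simp)
    (fun x y _ _ hx hy => by simp only [map_add, hx, hy])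
    (fun r x _ hx => by simp only [map_smul, hx]) hc
  rintro x ⟨u, v, hv, rfl⟩; exact h u v hv

variable (τ : H →ₗ[R] H)

lemma inner_lemma
    (halgmul : ∀ x y : H, τ (x * y) = τ x * τ y)
    {pbar : H} (hpbar : IsPrimitive R pbar) (hneg : τ pbar = -pbar)
    (f : H →ₗ[R] H)
    (hf : ∀ s, IsPrimProd R s → f (pbar * s + s * pbar) = pbar * f s + f s * pbar)
    {v : H} (hv : IsPrimProd R v) :
    convProd τ f (pbar * v + v * pbar) =
      convProd τ f v * pbar - pbar * convProd τ f v := by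
  have hc := comul_mem_Mset (R := R) hv
  have hp' : Coalgebra.comul (R := R) pbar = 1 ⊗ₜ[R] pbar + pbar ⊗ₜ[R] 1 := hpbar
  set e : H ⊗[R] H := 1 ⊗ₜ[R] pbar + pbar ⊗ₜ[R] 1 with he
  set c := Coalgebra.comul (R := R) v with hcdef
  have lhs_eq : convProd τ f (pbar * v + v * pbar) =
      ((LinearMap.mul' R H ∘ₗ TensorProduct.map τ f) ∘ₗ
        (LinearMap.mulLeft R e + LinearMap.mulRight R e)) c := by
    simp only [convProd, LinearMap.comp_apply, map_add, Bialgebra.comul_mul, hp',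
      LinearMap.add_apply, LinearMap.mulLeft_apply, LinearMap.mulRight_apply, he, hcdef]
  have rhs_eq : convProd τ f v * pbar - pbar * convProd τ f v =
      ((LinearMap.mulRight R pbar - LinearMap.mulLeft R pbar) ∘ₗ
        (LinearMap.mul' R H ∘ₗ TensorProduct.map τ f)) c := by
    simp only [convProd, LinearMap.comp_apply, LinearMap.sub_apply,
      LinearMap.mulLeft_apply, LinearMap.mulRight_apply, hcdef]
  rw [lhs_eq, rhs_eq]
  refine eq_on_Mset _ _ ?_ hc
  intro u w hw
  simp only [LinearMap.comp_apply, LinearMap.add_apply, LinearMap.sub_apply,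
    LinearMap.mulLeft_apply, LinearMap.mulRight_apply, he, add_mul, mul_add,
    Algebra.TensorProduct.tmul_mul_tmul, one_mul, mul_one, map_add,
    TensorProduct.map_tmul, LinearMap.mul'_apply]
  have key : f (pbar * w) = pbar * f w + f w * pbar - f (w * pbar) := by
    have : f (pbar * w) + f (w * pbar) = pbar * f w + f w * pbar := by
      rw [← map_add]; exact hf w hw
    exact eq_sub_of_add_eq this
  rw [halgmul pbar u, halgmul u pbar, hneg, key]
  noncomm_ring

lemma outer_lemma
    (halgmul : ∀ x y : H, τ (x * y) = τ x * τ y)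
    {pbar : H} (hpbar : IsPrimitive R pbar) (hneg : τ pbar = -pbar)
    (f : H →ₗ[R] H)
    (hf : ∀ s, IsPrimProd R s → f (pbar * s + s * pbar) = pbar * f s + f s * pbar)
    {s : H} (hs : IsPrimProd R s) :
    convProd LinearMap.id (convProd τ f) (pbar * s + s * pbar) =
      pbar * convProd LinearMap.id (convProd τ f) s +
        convProd LinearMap.id (convProd τ f) s * pbar := by
  have hc := comul_mem_Mset (R := R) hs
  have hp' : Coalgebra.comul (R := R) pbar = 1 ⊗ₜ[R] pbar + pbar ⊗ₜ[R] 1 := hpbar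
  set g := convProd τ f with hg
  set e : H ⊗[R] H := 1 ⊗ₜ[R] pbar + pbar ⊗ₜ[R] 1 with he
  set c := Coalgebra.comul (R := R) s with hcdef
  have lhs_eq : convProd LinearMap.id g (pbar * s + s * pbar) =
      ((LinearMap.mul' R H ∘ₗ TensorProduct.map LinearMap.id g) ∘ₗ
        (LinearMap.mulLeft R e + LinearMap.mulRight R e)) c := by
    simp only [convProd, LinearMap.comp_apply, map_add, Bialgebra.comul_mul, hp',
      LinearMap.add_apply, LinearMap.mulLeft_apply, LinearMap.mulRight_apply, he, hcdef]
  have rhs_eq : pbar * convProd LinearMap.id g s + convProd LinearMap.id g s * pbar =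
      ((LinearMap.mulRight R pbar + LinearMap.mulLeft R pbar) ∘ₗ
        (LinearMap.mul' R H ∘ₗ TensorProduct.map LinearMap.id g)) c := by
    simp only [convProd, LinearMap.comp_apply, LinearMap.add_apply,
      LinearMap.mulLeft_apply, LinearMap.mulRight_apply, hcdef]
    abel
  rw [lhs_eq, rhs_eq]
  refine eq_on_Mset _ _ ?_ hc
  intro u w hw
  simp only [LinearMap.comp_apply, LinearMap.add_apply,
    LinearMap.mulLeft_apply, LinearMap.mulRight_apply, he, add_mul, mul_add,
    Algebra.TensorProduct.tmul_mul_tmul, one_mul, mul_one, map_add,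
    TensorProduct.map_tmul, LinearMap.mul'_apply, LinearMap.id_apply]
  have key : g (pbar * w) = g w * pbar - pbar * g w - g (w * pbar) := by
    have : g (pbar * w) + g (w * pbar) = g w * pbar - pbar * g w := by
      rw [← map_add]; exact inner_lemma τ halgmul hpbar hneg f hf hw
    exact eq_sub_of_add_eq this
  rw [key]
  noncomm_ring

lemma psiPlus_one : PsiPlus τ 1 = LinearMap.id := rfl

lemma psiPlus_rec (b : ℕ) :
    PsiPlus τ (b + 3) = convProd LinearMap.id (convProd τ (PsiPlus τ (b + 1))) := rfl

lemma tau_comp_convProd (halgmul : ∀ x y : H, τ (x * y) = τ x * τ y) (f g : H →ₗ[R] H) :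
    τ ∘ₗ convProd f g = convProd (τ ∘ₗ f) (τ ∘ₗ g) := by
  apply LinearMap.ext; intro x
  simp only [LinearMap.comp_apply, convProd]
  set c := Coalgebra.comul (R := R) x
  induction c using TensorProduct.induction_on with
  | zero => simp
  | tmul a b => simp [halgmul]
  | add x y hx hy => simp only [map_add, hx, hy]

lemma psiAux_snd (hinv : ∀ x, τ (τ x) = x)
    (halgmul : ∀ x y : H, τ (x * y) = τ x * τ y) :
    ∀ n, (PsiAux τ n).2 = τ ∘ₗ (PsiAux τ n).1
  | 0 => by simp [PsiAux]
  | n + 1 => by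
      simp only [PsiAux]
      rw [tau_comp_convProd τ halgmul, psiAux_snd hinv halgmul n, LinearMap.comp_id]
      congr 1
      apply LinearMap.ext; intro x
      simp [hinv]

lemma plus_comm
    (halgmul : ∀ x y : H, τ (x * y) = τ x * τ y)
    {pbar : H} (hpbar : IsPrimitive R pbar) (hneg : τ pbar = -pbar) :
    ∀ n, ∀ s, IsPrimProd R s →
      PsiPlus τ (2 * n + 1) (pbar * s + s * pbar) =
        pbar * PsiPlus τ (2 * n + 1) s + PsiPlus τ (2 * n + 1) s * pbar := by
  intro n
  induction n with
  | zero => intro s _; simp [psiPlus_one]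
  | succ n ih =>
      intro s hs
      have hidx : 2 * (n + 1) + 1 = 2 * n + 3 := by ring
      rw [hidx, psiPlus_rec]
      have h1 : 2 * n + 1 = 2 * n + 1 := rfl
      exact outer_lemma τ halgmul hpbar hneg (PsiPlus τ (2 * n + 1)) ih hs

end Aux2

/-- if `τ` is a linear involution on a bialgebra `H` that is an algebra
morphism and a coalgebra (anti)morphism, `p̄` is a primitive with `τ(p̄) = −p̄`, and
`s = p_1⋯p_m` is any product of primitives, then for every odd `a ≥ 1`:
`Ψ_a^+(p̄s + sp̄) = p̄·Ψ_a^+(s) + Ψ_a^+(s)·p̄` and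
`Ψ_a^−(p̄s + sp̄) = −p̄·Ψ_a^−(s) − Ψ_a^−(s)·p̄`. -/
theorem negating_primitive_commutation_morphism_odd
    {R H : Type*} [CommRing R] [Ring H] [Bialgebra R H]
    (τ : H →ₗ[R] H)
    (hinv : ∀ x, τ (τ x) = x)
    (halg1 : τ 1 = 1) (halgmul : ∀ x y : H, τ (x * y) = τ x * τ y)
    (hco : IsCoalgMorph τ ∨ IsCoalgAntimorph τ)
    (pbar : H) (hpbar : IsPrimitive R pbar) (hneg : τ pbar = -pbar)
    (m : ℕ) (q : Fin m → H) (hq : ∀ i, IsPrimitive R (q i))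
    (a : ℕ) (ha : 1 ≤ a) (haodd : Odd a) :
    PsiPlus τ a (pbar * (List.ofFn q).prod + (List.ofFn q).prod * pbar) =
        pbar * PsiPlus τ a ((List.ofFn q).prod) + PsiPlus τ a ((List.ofFn q).prod) * pbar ∧
    PsiMinus τ a (pbar * (List.ofFn q).prod + (List.ofFn q).prod * pbar) =
        -(pbar * PsiMinus τ a ((List.ofFn q).prod)) -
          PsiMinus τ a ((List.ofFn q).prod) * pbar := by
  obtain ⟨n, rfl⟩ := haodd
  have hs : IsPrimProd R (List.ofFn q).prod :=
    ⟨List.ofFn q, fun p hp => by obtain ⟨i, rfl⟩ := List.mem_ofFn.mp hp; exact hq i, rfl⟩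
  have hplus := plus_comm τ halgmul hpbar hneg n _ hs
  refine ⟨hplus, ?_⟩
  have hm : PsiMinus τ (2 * n + 1) = τ ∘ₗ PsiPlus τ (2 * n + 1) :=
    psiAux_snd τ hinv halgmul _
  rw [hm]
  simp only [LinearMap.comp_apply]
  rw [hplus, map_add, halgmul, halgmul, hneg]
  noncomm_ring
end

section
/- Let H be a bialgebra over a commutative ring R and let τ : H → H be an R-linear involution that is an algebra antimorphism and is either a coalgebra morphism or a coalgebra antimorphism. Let p_1, …, p_k ∈ H be primitive with τ(p_i) = p_i, and let p̄_1, …, p̄_k̄ ∈ H be primitive with τ(p̄_j) = −p̄_j (k, k̄ ≥ 0). Write P := Σ_{σ ∈ S_k} p_{σ(1)}⋯p_{σ(k)}. Then for every odd integer a ≥ 1: Ψ_a^+(p̄_1⋯p̄_k̄ · P) = (a·1_R)^k · (p̄_1⋯p̄_k̄ · P) and Ψ_a^+(P · p̄_1⋯p̄_k̄) = (a·1_R)^k · (P · p̄_1⋯p̄_k̄). -/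
open TensorProduct

namespace FRAux

section ConvLemmas

variable {R H : Type*} [CommRing R] [Ring H] [Bialgebra R H]

lemma convProd_apply' (f g : H →ₗ[R] H) (x : H) :
    convProd f g x = LinearMap.mul' R H (TensorProduct.map f g (Coalgebra.comul x)) := rfl

lemma convProd_mulLeft_comp_left (f g : H →ₗ[R] H) (q x : H) :
    convProd (LinearMap.mulLeft R q ∘ₗ f) g x = q * convProd f g x := by
  rw [convProd_apply', convProd_apply']
  generalize Coalgebra.comul (R := R) x = t
  induction t with
  | zero => simp
  | tmul a b => simp [mul_assoc]
  | add s t hs ht => simp only [map_add, mul_add, hs, ht]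

lemma convProd_mulRight_comp_right (f g : H →ₗ[R] H) (q x : H) :
    convProd f (LinearMap.mulRight R q ∘ₗ g) x = convProd f g x * q := by
  rw [convProd_apply', convProd_apply']
  generalize Coalgebra.comul (R := R) x = t
  induction t with
  | zero => simp
  | tmul a b => simp [mul_assoc]
  | add s t hs ht => simp only [map_add, add_mul, hs, ht]

lemma convProd_mid (f g : H →ₗ[R] H) (q x : H) :
    convProd (LinearMap.mulRight R q ∘ₗ f) g x = convProd f (LinearMap.mulLeft R q ∘ₗ g) x := by
  rw [convProd_apply', convProd_apply']
  generalize Coalgebra.comul (R := R) x = t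
  induction t with
  | zero => simp
  | tmul a b => simp [mul_assoc]
  | add s t hs ht => simp only [map_add, hs, ht]

lemma convProd_mid' (g : H →ₗ[R] H) (q x : H) :
    convProd (LinearMap.mulRight R q) g x
      = convProd LinearMap.id (LinearMap.mulLeft R q ∘ₗ g) x := by
  rw [← LinearMap.comp_id (LinearMap.mulRight R q), convProd_mid]

lemma convProd_mulLeft_left' (g : H →ₗ[R] H) (q x : H) :
    convProd (LinearMap.mulLeft R q) g x = q * convProd LinearMap.id g x := by
  rw [← LinearMap.comp_id (LinearMap.mulLeft R q), convProd_mulLeft_comp_left]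

lemma convProd_neg_left (f g : H →ₗ[R] H) (x : H) :
    convProd (-f) g x = -convProd f g x := by
  rw [convProd_apply', convProd_apply']
  generalize Coalgebra.comul (R := R) x = t
  induction t with
  | zero => simp
  | tmul a b => simp
  | add s t hs ht => simp only [map_add, hs, ht, neg_add]

lemma convProd_neg_right (f g : H →ₗ[R] H) (x : H) :
    convProd f (-g) x = -convProd f g x := by
  rw [convProd_apply', convProd_apply']
  generalize Coalgebra.comul (R := R) x = t
  induction t with
  | zero => simp
  | tmul a b => simp
  | add s t hs ht => simp only [map_add, hs, ht, neg_add]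

lemma convProd_sub_right (f g g' : H →ₗ[R] H) (x : H) :
    convProd f (g - g') x = convProd f g x - convProd f g' x := by
  rw [convProd_apply', convProd_apply', convProd_apply']
  generalize Coalgebra.comul (R := R) x = t
  induction t with
  | zero => simp
  | tmul a b => simp [mul_sub]
  | add s t hs ht => simp only [map_add, hs, ht]; abel

lemma convProd_zero_right (f : H →ₗ[R] H) (x : H) :
    convProd f (0 : H →ₗ[R] H) x = 0 := by
  rw [convProd_apply']
  generalize Coalgebra.comul (R := R) x = t
  induction t with
  | zero => simp
  | tmul a b => simp
  | add s t hs ht => simp only [map_add, hs, ht, add_zero]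

lemma convProd_mul_left (f g : H →ₗ[R] H) {q : H} (hq : IsPrimitive R q) (x : H) :
    convProd f g (q * x)
      = convProd f (g ∘ₗ LinearMap.mulLeft R q) x
        + convProd (f ∘ₗ LinearMap.mulLeft R q) g x := by
  rw [convProd_apply', convProd_apply', convProd_apply', Bialgebra.comul_mul, hq]
  generalize Coalgebra.comul (R := R) x = t
  induction t with
  | zero => simp
  | tmul a b => simp [add_mul, Algebra.TensorProduct.tmul_mul_tmul]
  | add s t hs ht => simp only [mul_add, map_add, hs, ht]; abel

lemma convProd_mul_right (f g : H →ₗ[R] H) {q : H} (hq : IsPrimitive R q) (x : H) :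
    convProd f g (x * q)
      = convProd f (g ∘ₗ LinearMap.mulRight R q) x
        + convProd (f ∘ₗ LinearMap.mulRight R q) g x := by
  rw [convProd_apply', convProd_apply', convProd_apply', Bialgebra.comul_mul, hq]
  generalize Coalgebra.comul (R := R) x = t
  induction t with
  | zero => simp
  | tmul a b => simp [mul_add, Algebra.TensorProduct.tmul_mul_tmul]
  | add s t hs ht => simp only [add_mul, map_add, hs, ht]; abel

end ConvLemmas

section Steps

variable {R H : Type*} [CommRing R] [Ring H] [Bialgebra R H]
variable (τ : H →ₗ[R] H)
variable (halgmul : ∀ x y : H, τ (x * y) = τ y * τ x)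
variable {q : H} (hq : IsPrimitive R q) (hqneg : τ q = -q)

include halgmul hq hqneg

lemma step_odd (F G : H →ₗ[R] H)
    (hS1 : ∀ x, G (q * x) = q * G x) (hS2 : ∀ x, F (q * x) = -(F x * q))
    (hT1 : ∀ x, G (x * q) = G x * q) (hT2 : ∀ x, F (x * q) = -(q * F x)) :
    (∀ x, convProd LinearMap.id F (q * x)
        = q * convProd LinearMap.id F x - convProd LinearMap.id F x * q)
    ∧ (∀ x, convProd τ G (q * x) = 0)
    ∧ (∀ x, convProd LinearMap.id F (x * q) = 0)
    ∧ (∀ x, convProd τ G (x * q) = convProd τ G x * q - q * convProd τ G x) := by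
  have hτL : τ ∘ₗ LinearMap.mulLeft R q = -(LinearMap.mulRight R q ∘ₗ τ) :=
    LinearMap.ext fun y => by
      simp only [LinearMap.comp_apply, LinearMap.mulLeft_apply, LinearMap.mulRight_apply,
        LinearMap.neg_apply, halgmul, hqneg, mul_neg]
  have hτR : τ ∘ₗ LinearMap.mulRight R q = -(LinearMap.mulLeft R q ∘ₗ τ) :=
    LinearMap.ext fun y => by
      simp only [LinearMap.comp_apply, LinearMap.mulLeft_apply, LinearMap.mulRight_apply,
        LinearMap.neg_apply, halgmul, hqneg, neg_mul]
  have hGL : G ∘ₗ LinearMap.mulLeft R q = LinearMap.mulLeft R q ∘ₗ G :=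
    LinearMap.ext fun y => by simp [hS1 y]
  have hFL : F ∘ₗ LinearMap.mulLeft R q = -(LinearMap.mulRight R q ∘ₗ F) :=
    LinearMap.ext fun y => by simp [hS2 y]
  have hGR : G ∘ₗ LinearMap.mulRight R q = LinearMap.mulRight R q ∘ₗ G :=
    LinearMap.ext fun y => by simp [hT1 y]
  have hFR : F ∘ₗ LinearMap.mulRight R q = -(LinearMap.mulLeft R q ∘ₗ F) :=
    LinearMap.ext fun y => by simp [hT2 y]
  refine ⟨fun x => ?_, fun x => ?_, fun x => ?_, fun x => ?_⟩
  · rw [convProd_mul_left _ _ hq, hFL, convProd_neg_right,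
      convProd_mulRight_comp_right, LinearMap.id_comp, convProd_mulLeft_left']
    abel
  · rw [convProd_mul_left _ _ hq, hGL, hτL, convProd_neg_left, convProd_mid]
    abel
  · rw [convProd_mul_right _ _ hq, hFR, convProd_neg_right, LinearMap.id_comp,
      convProd_mid']
    abel
  · rw [convProd_mul_right _ _ hq, hGR, hτR, convProd_neg_left,
      convProd_mulLeft_comp_left, convProd_mulRight_comp_right]
    abel

lemma step_even (A B : H →ₗ[R] H)
    (hS3 : ∀ x, A (q * x) = q * A x - A x * q) (hS4 : ∀ x, B (q * x) = 0)
    (hT3 : ∀ x, A (x * q) = 0) (hT4 : ∀ x, B (x * q) = B x * q - q * B x) :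
    (∀ x, convProd LinearMap.id B (q * x) = q * convProd LinearMap.id B x)
    ∧ (∀ x, convProd τ A (q * x) = -(convProd τ A x * q))
    ∧ (∀ x, convProd LinearMap.id B (x * q) = convProd LinearMap.id B x * q)
    ∧ (∀ x, convProd τ A (x * q) = -(q * convProd τ A x)) := by
  have hτL : τ ∘ₗ LinearMap.mulLeft R q = -(LinearMap.mulRight R q ∘ₗ τ) :=
    LinearMap.ext fun y => by
      simp only [LinearMap.comp_apply, LinearMap.mulLeft_apply, LinearMap.mulRight_apply,
        LinearMap.neg_apply, halgmul, hqneg, mul_neg]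
  have hτR : τ ∘ₗ LinearMap.mulRight R q = -(LinearMap.mulLeft R q ∘ₗ τ) :=
    LinearMap.ext fun y => by
      simp only [LinearMap.comp_apply, LinearMap.mulLeft_apply, LinearMap.mulRight_apply,
        LinearMap.neg_apply, halgmul, hqneg, neg_mul]
  have hAL : A ∘ₗ LinearMap.mulLeft R q
      = LinearMap.mulLeft R q ∘ₗ A - LinearMap.mulRight R q ∘ₗ A :=
    LinearMap.ext fun y => by simp [hS3 y]
  have hBL : B ∘ₗ LinearMap.mulLeft R q = 0 := LinearMap.ext fun y => by simp [hS4 y]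
  have hAR : A ∘ₗ LinearMap.mulRight R q = 0 := LinearMap.ext fun y => by simp [hT3 y]
  have hBR : B ∘ₗ LinearMap.mulRight R q
      = LinearMap.mulRight R q ∘ₗ B - LinearMap.mulLeft R q ∘ₗ B :=
    LinearMap.ext fun y => by simp [hT4 y]
  refine ⟨fun x => ?_, fun x => ?_, fun x => ?_, fun x => ?_⟩
  · rw [convProd_mul_left _ _ hq, hBL, convProd_zero_right, LinearMap.id_comp,
      convProd_mulLeft_left']
    abel
  · rw [convProd_mul_left _ _ hq, hAL, hτL, convProd_neg_left, convProd_mid,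
      convProd_sub_right, convProd_mulRight_comp_right]
    abel
  · rw [convProd_mul_right _ _ hq, hBR, convProd_sub_right,
      convProd_mulRight_comp_right, LinearMap.id_comp, convProd_mid']
    abel
  · rw [convProd_mul_right _ _ hq, hAR, convProd_zero_right, hτR, convProd_neg_left,
      convProd_mulLeft_comp_left]
    abel

end Steps

section Quad

variable {R H : Type*} [CommRing R] [Ring H] [Bialgebra R H]

lemma quad_minus (τ : H →ₗ[R] H) (halgmul : ∀ x y : H, τ (x * y) = τ y * τ x)
    {q : H} (hq : IsPrimitive R q) (hqneg : τ q = -q) (m : ℕ) :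
    (∀ x, (PsiAux τ (2 * m)).1 (q * x) = q * (PsiAux τ (2 * m)).1 x)
    ∧ (∀ x, (PsiAux τ (2 * m)).2 (q * x) = -((PsiAux τ (2 * m)).2 x * q))
    ∧ (∀ x, (PsiAux τ (2 * m)).1 (x * q) = (PsiAux τ (2 * m)).1 x * q)
    ∧ (∀ x, (PsiAux τ (2 * m)).2 (x * q) = -(q * (PsiAux τ (2 * m)).2 x)) := by
  induction m with
  | zero =>
      refine ⟨fun x => rfl, fun x => ?_, fun x => rfl, fun x => ?_⟩
      · show τ (q * x) = -(τ x * q)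
        rw [halgmul, hqneg, mul_neg]
      · show τ (x * q) = -(q * τ x)
        rw [halgmul, hqneg, neg_mul]
  | succ m ih =>
      obtain ⟨hS1, hS2, hT1, hT2⟩ := ih
      obtain ⟨hS3, hS4, hT3, hT4⟩ :=
        step_odd τ halgmul hq hqneg (PsiAux τ (2 * m)).2 (PsiAux τ (2 * m)).1 hS1 hS2 hT1 hT2
      have h2 : 2 * (m + 1) = 2 * m + 1 + 1 := by omega
      rw [h2]
      have hu1 : (PsiAux τ (2 * m + 1 + 1)).1
          = convProd LinearMap.id (convProd τ (PsiAux τ (2 * m)).1) := rfl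
      have hu2 : (PsiAux τ (2 * m + 1 + 1)).2
          = convProd τ (convProd LinearMap.id (PsiAux τ (2 * m)).2) := rfl
      obtain ⟨c1, c2, c3, c4⟩ :=
        step_even τ halgmul hq hqneg
          (convProd LinearMap.id (PsiAux τ (2 * m)).2) (convProd τ (PsiAux τ (2 * m)).1)
          hS3 hS4 hT3 hT4
      exact ⟨fun x => by rw [hu1]; exact c1 x, fun x => by rw [hu2]; exact c2 x,
        fun x => by rw [hu1]; exact c3 x, fun x => by rw [hu2]; exact c4 x⟩

end Quad

section Eigen

variable {R H : Type*} [CommRing R] [Ring H] [Bialgebra R H]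

lemma tau_pow (τ : H →ₗ[R] H) (halg1 : τ 1 = 1)
    (halgmul : ∀ x y : H, τ (x * y) = τ y * τ x)
    {q : H} (hqfix : τ q = q) (j : ℕ) : τ (q ^ j) = q ^ j := by
  induction j with
  | zero => simpa using halg1
  | succ j ih =>
      rw [pow_succ, halgmul, hqfix, ih, ← pow_succ']
      exact pow_succ q j

lemma comul_pow_primitive {q : H} (hq : IsPrimitive R q) (j : ℕ) :
    Coalgebra.comul (R := R) (q ^ j)
      = ∑ m ∈ Finset.HasAntidiagonal.antidiagonal j, j.choose m.1 • ((q ^ m.2 : H) ⊗ₜ[R] (q ^ m.1 : H)) := by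
  have h1 : Coalgebra.comul (R := R) (q ^ j) = (Coalgebra.comul (R := R) q) ^ j :=
    map_pow (Bialgebra.comulAlgHom R H) q j
  have hcomm : Commute ((1 : H) ⊗ₜ[R] q) (q ⊗ₜ[R] (1 : H)) := by
    simp [Commute, SemiconjBy, Algebra.TensorProduct.tmul_mul_tmul]
  rw [h1, hq, hcomm.add_pow']
  refine Finset.sum_congr rfl fun m _ => ?_
  congr 1
  rw [Algebra.TensorProduct.tmul_pow, Algebra.TensorProduct.tmul_pow,
    Algebra.TensorProduct.tmul_mul_tmul, one_pow, one_pow, one_mul, mul_one]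

lemma eigen_plus (τ : H →ₗ[R] H) (halg1 : τ 1 = 1)
    (halgmul : ∀ x y : H, τ (x * y) = τ y * τ x)
    {q : H} (hq : IsPrimitive R q) (hqfix : τ q = q) (n : ℕ) :
    ∀ j : ℕ, (PsiAux τ n).1 (q ^ j) = (((n + 1 : ℕ) : R)) ^ j • q ^ j
      ∧ (PsiAux τ n).2 (q ^ j) = (((n + 1 : ℕ) : R)) ^ j • q ^ j := by
  induction n with
  | zero =>
      intro j
      constructor
      · show (q ^ j : H) = (((0 + 1 : ℕ) : R)) ^ j • q ^ j
        simp
      · show τ (q ^ j) = (((0 + 1 : ℕ) : R)) ^ j • q ^ j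
        rw [tau_pow τ halg1 halgmul hqfix j]
        simp
  | succ n ih =>
      have main : ∀ u F : H →ₗ[R] H, (∀ i, u (q ^ i) = q ^ i) →
          (∀ i, F (q ^ i) = (((n + 1 : ℕ) : R)) ^ i • q ^ i) → ∀ j,
          convProd u F (q ^ j) = (((n + 1 + 1 : ℕ) : R)) ^ j • q ^ j := by
        intro u F hu hF j
        rw [convProd_apply', comul_pow_primitive hq j, map_sum, map_sum]
        have hterm : ∀ m ∈ Finset.HasAntidiagonal.antidiagonal j,
            LinearMap.mul' R H (TensorProduct.map u F
                (j.choose m.1 • ((q ^ m.2 : H) ⊗ₜ[R] (q ^ m.1 : H))))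
              = j.choose m.1 • ((((n + 1 : ℕ) : R)) ^ m.1 • q ^ j) := by
          intro m hm
          have hmj : m.1 + m.2 = j := Finset.HasAntidiagonal.mem_antidiagonal.mp hm
          rw [map_nsmul, map_nsmul, TensorProduct.map_tmul, LinearMap.mul'_apply, hu, hF,
            mul_smul_comm, ← pow_add]
          rw [show m.2 + m.1 = j by omega]
        rw [Finset.sum_congr rfl hterm]
        have hc : ((n + 1 + 1 : ℕ) : R) = ((n + 1 : ℕ) : R) + 1 := by push_cast; ring
        rw [hc, (Commute.all (((n + 1 : ℕ) : R)) 1).add_pow' j, Finset.sum_smul]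
        refine Finset.sum_congr rfl fun m hm => ?_
        rw [one_pow, mul_one, smul_assoc]
      intro j
      exact ⟨main LinearMap.id _ (fun i => rfl) (fun i => (ih i).2) j,
        main τ _ (fun i => tau_pow τ halg1 halgmul hqfix i) (fun i => (ih i).1) j⟩

end Eigen

section Combinatorics

variable {H : Type*} [Ring H]

lemma sum_pow_eq {k : ℕ} (p : Fin k → H) (S : Finset (Fin k)) (n : ℕ) :
    (∑ i ∈ S, p i) ^ n =
      ∑ f : Fin n → Fin k,
        if ∀ j, f j ∈ S then (List.ofFn fun j => p (f j)).prod else 0 := by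
  induction n with
  | zero =>
      rw [pow_zero, Fintype.sum_unique]
      simp
  | succ n ih =>
      rw [pow_succ', ih]
      rw [← Equiv.sum_comp (Fin.consEquiv fun _ : Fin (n + 1) => Fin k)]
      rw [Fintype.sum_prod_type]
      have hterm : ∀ i : Fin k, ∀ f : Fin n → Fin k,
          (if ∀ j, (Fin.consEquiv fun _ => Fin k) (i, f) j ∈ S then
              (List.ofFn fun j => p ((Fin.consEquiv fun _ => Fin k) (i, f) j)).prod else 0)
            = (if i ∈ S then
                (if ∀ j, f j ∈ S then p i * (List.ofFn fun j => p (f j)).prod else 0)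
                else 0) := by
        intro i f
        have hcond : (∀ j, (Fin.consEquiv fun _ => Fin k) (i, f) j ∈ S)
            ↔ (i ∈ S ∧ ∀ j, f j ∈ S) := by
          rw [Fin.forall_fin_succ]
          simp [Fin.consEquiv]
        have hword : (List.ofFn fun j => p ((Fin.consEquiv fun _ => Fin k) (i, f) j)).prod
            = p i * (List.ofFn fun j => p (f j)).prod := by
          rw [List.ofFn_succ]
          simp [Fin.consEquiv]
        rw [hword, if_congr hcond rfl rfl]
        by_cases h1 : i ∈ S <;> by_cases h2 : ∀ j, f j ∈ S <;> simp [h1, h2]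
      simp only [hterm]
      have hpull : ∀ i : Fin k,
          (∑ f : Fin n → Fin k, if i ∈ S then
              (if ∀ j, f j ∈ S then p i * (List.ofFn fun j => p (f j)).prod else 0) else 0)
            = if i ∈ S then
                p i * (∑ f : Fin n → Fin k,
                  if ∀ j, f j ∈ S then (List.ofFn fun j => p (f j)).prod else 0) else 0 := by
        intro i
        by_cases h : i ∈ S
        · simp only [h, if_true, Finset.mul_sum, mul_ite, mul_zero]
        · simp [h]
      rw [Finset.sum_congr rfl fun i _ => hpull i, Finset.sum_ite_mem, Finset.univ_inter,
        Finset.sum_mul]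

lemma ie_coeff {k : ℕ} (T : Finset (Fin k)) :
    (∑ S ∈ (Finset.univ : Finset (Fin k)).powerset,
        if T ⊆ S then ((-1 : ℤ) ^ (k - S.card)) else 0)
      = if T = Finset.univ then 1 else 0 := by
  rw [← Finset.sum_filter]
  have hbij : ∑ S ∈ (Finset.univ : Finset (Fin k)).powerset.filter (fun S => T ⊆ S),
        (-1 : ℤ) ^ (k - S.card)
      = ∑ U ∈ (Finset.univ \ T).powerset, (-1 : ℤ) ^ ((Finset.univ \ T).card - U.card) := by
    refine Finset.sum_nbij' (fun S => S \ T) (fun U => T ∪ U) ?_ ?_ ?_ ?_ ?_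
    · intro S hS
      rw [Finset.mem_filter] at hS
      exact Finset.mem_powerset.mpr (Finset.sdiff_subset_sdiff (Finset.subset_univ S) le_rfl)
    · intro U hU
      exact Finset.mem_filter.mpr ⟨Finset.mem_powerset.mpr (Finset.subset_univ _),
        Finset.subset_union_left⟩
    · intro S hS
      rw [Finset.mem_filter] at hS
      exact Finset.union_sdiff_of_subset hS.2
    · intro U hU
      rw [Finset.mem_powerset] at hU
      exact Finset.union_sdiff_cancel_left
        (Finset.disjoint_left.mpr fun a haT haU => (Finset.mem_sdiff.mp (hU haU)).2 haT)
    · intro S hS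
      rw [Finset.mem_filter] at hS
      congr 1
      show k - S.card = (Finset.univ \ T).card - (S \ T).card
      have hc1 : (S \ T).card = S.card - T.card := Finset.card_sdiff_of_subset hS.2
      have hc2 : (Finset.univ \ T).card = k - T.card := by
        rw [Finset.card_sdiff_of_subset (Finset.subset_univ T), Finset.card_univ, Fintype.card_fin]
      have hc3 : T.card ≤ S.card := Finset.card_le_card hS.2
      have hc4 : S.card ≤ k := by
        calc S.card ≤ Finset.univ.card := Finset.card_le_card (Finset.subset_univ S)
        _ = k := by rw [Finset.card_univ, Fintype.card_fin]
      omega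
  rw [hbij]
  have key : ∀ U ∈ (Finset.univ \ T).powerset,
      (-1 : ℤ) ^ ((Finset.univ \ T).card - U.card)
        = (-1 : ℤ) ^ (Finset.univ \ T).card * (-1 : ℤ) ^ U.card := by
    intro U hU
    have hb : U.card ≤ (Finset.univ \ T).card :=
      Finset.card_le_card (Finset.mem_powerset.mp hU)
    have h4 : ((-1 : ℤ) ^ U.card) * ((-1 : ℤ) ^ U.card) = 1 := by
      rw [← pow_add]
      exact Even.neg_one_pow ⟨U.card, rfl⟩
    calc (-1 : ℤ) ^ ((Finset.univ \ T).card - U.card)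
        = (-1 : ℤ) ^ ((Finset.univ \ T).card - U.card)
            * (((-1 : ℤ) ^ U.card) * ((-1 : ℤ) ^ U.card)) := by rw [h4, mul_one]
      _ = ((-1 : ℤ) ^ ((Finset.univ \ T).card - U.card) * (-1 : ℤ) ^ U.card)
            * (-1 : ℤ) ^ U.card := by ring
      _ = (-1 : ℤ) ^ (Finset.univ \ T).card * (-1 : ℤ) ^ U.card := by
            rw [← pow_add, Nat.sub_add_cancel hb]
  rw [Finset.sum_congr rfl key, ← Finset.mul_sum, Finset.sum_powerset_neg_one_pow_card]
  by_cases hT : T = Finset.univ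
  · simp [hT]
  · have hne : Finset.univ \ T ≠ ∅ := by
      intro h
      exact hT (Finset.univ_subset_iff.mp (Finset.sdiff_eq_empty_iff_subset.mp h))
    simp [hT, hne]

lemma sum_surj_eq_perm {k : ℕ} (p : Fin k → H) :
    (∑ f : Fin k → Fin k,
        if Finset.image f Finset.univ = Finset.univ
          then (List.ofFn fun j => p (f j)).prod else 0)
      = ∑ σ : Equiv.Perm (Fin k), (List.ofFn fun i => p (σ i)).prod := by
  classical
  rw [← Finset.sum_filter]
  refine (Finset.sum_nbij' (i := fun σ : Equiv.Perm (Fin k) => (σ : Fin k → Fin k))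
    (j := fun f => if h : Function.Bijective f then Equiv.ofBijective f h else Equiv.refl _)
    ?_ ?_ ?_ ?_ ?_).symm
  · intro σ _
    refine Finset.mem_filter.mpr ⟨Finset.mem_univ _, ?_⟩
    exact Finset.eq_univ_iff_forall.mpr fun y =>
      Finset.mem_image.mpr ⟨σ.symm y, Finset.mem_univ _, σ.apply_symm_apply y⟩
  · intro f _
    exact Finset.mem_univ _
  · intro σ _
    have hb : Function.Bijective (σ : Fin k → Fin k) := σ.bijective
    show (if h : Function.Bijective (σ : Fin k → Fin k) then
        Equiv.ofBijective _ h else Equiv.refl _) = σ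
    rw [dif_pos hb]
    exact Equiv.ext fun x => rfl
  · intro f hf
    have hsurj : Function.Surjective f := by
      intro y
      have hmem := Finset.mem_filter.mp hf
      have hy : y ∈ Finset.image f Finset.univ := by
        rw [hmem.2]
        exact Finset.mem_univ y
      obtain ⟨x, _, hx⟩ := Finset.mem_image.mp hy
      exact ⟨x, hx⟩
    have hb : Function.Bijective f := Finite.surjective_iff_bijective.mp hsurj
    show ⇑(if h : Function.Bijective f then Equiv.ofBijective f h else Equiv.refl _) = f
    rw [dif_pos hb]
    rfl
  · intro σ _
    rfl

lemma symm_decomp {k : ℕ} (p : Fin k → H) :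
    (∑ σ : Equiv.Perm (Fin k), (List.ofFn fun i => p (σ i)).prod)
      = ∑ S ∈ (Finset.univ : Finset (Fin k)).powerset,
          (-1 : ℤ) ^ (k - S.card) • (∑ i ∈ S, p i) ^ k := by
  rw [← sum_surj_eq_perm]
  have hSrw : ∀ S ∈ (Finset.univ : Finset (Fin k)).powerset,
      (-1 : ℤ) ^ (k - S.card) • (∑ i ∈ S, p i) ^ k
        = ∑ f : Fin k → Fin k, (-1 : ℤ) ^ (k - S.card)
            • (if ∀ j, f j ∈ S then (List.ofFn fun j => p (f j)).prod else 0) := by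
    intro S _
    rw [sum_pow_eq, Finset.smul_sum]
  rw [Finset.sum_congr rfl hSrw, Finset.sum_comm]
  refine Finset.sum_congr rfl fun f _ => ?_
  have h1 : ∀ S ∈ (Finset.univ : Finset (Fin k)).powerset,
      (-1 : ℤ) ^ (k - S.card)
          • (if ∀ j, f j ∈ S then (List.ofFn fun j => p (f j)).prod else 0)
        = (if Finset.image f Finset.univ ⊆ S then ((-1 : ℤ) ^ (k - S.card)) else 0)
            • (List.ofFn fun j => p (f j)).prod := by
    intro S _
    have hcond : (Finset.image f Finset.univ ⊆ S) ↔ (∀ j, f j ∈ S) := by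
      rw [Finset.image_subset_iff]
      simp
    by_cases h : ∀ j, f j ∈ S <;> simp [hcond, h]
  rw [Finset.sum_congr rfl h1, ← Finset.sum_smul, ie_coeff]
  by_cases h : Finset.image f Finset.univ = Finset.univ <;> simp [h]

end Combinatorics

section Pull

variable {R H : Type*} [CommRing R] [Ring H] [Bialgebra R H]

lemma pull_left (Ψ : H →ₗ[R] H) (l : List H)
    (h : ∀ q ∈ l, ∀ x, Ψ (q * x) = q * Ψ x) (y : H) :
    Ψ (l.prod * y) = l.prod * Ψ y := by
  induction l with
  | nil => simp
  | cons q l ih =>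
      rw [List.prod_cons, mul_assoc, h q (List.mem_cons_self) _,
        ih (fun r hr => h r (List.mem_cons_of_mem q hr)), mul_assoc]

lemma pull_right (Ψ : H →ₗ[R] H) (l : List H)
    (h : ∀ q ∈ l, ∀ x, Ψ (x * q) = Ψ x * q) (y : H) :
    Ψ (y * l.prod) = Ψ y * l.prod := by
  induction l using List.reverseRecOn with
  | nil => simp
  | append_singleton l q ih =>
      rw [List.prod_append, List.prod_cons, List.prod_nil, mul_one, ← mul_assoc,
        h q (by simp) _, ih (fun r hr => h r (by simp [hr])), mul_assoc]

end Pull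

end FRAux

/-- `τ` a linear involution on a bialgebra `H`, an algebra antimorphism and
coalgebra (anti)morphism; `p_1,…,p_k` `τ`-invariant primitives, `p̄_1,…,p̄_k̄` `τ`-negating
primitives, `P` the symmetrised product of the `p_i`. Then for every odd `a ≥ 1`:
`Ψ_a^+(p̄_1⋯p̄_k̄·P) = (a·1_R)^k • (p̄_1⋯p̄_k̄·P)` and
`Ψ_a^+(P·p̄_1⋯p̄_k̄) = (a·1_R)^k • (P·p̄_1⋯p̄_k̄)`. -/


theorem flip_riffle_odd_plus_eigenvectors
    {R H : Type*} [CommRing R] [Ring H] [Bialgebra R H]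
    (τ : H →ₗ[R] H)
    (hinv : ∀ x, τ (τ x) = x)
    (halg1 : τ 1 = 1) (halgmul : ∀ x y : H, τ (x * y) = τ y * τ x)
    (hco : IsCoalgMorph τ ∨ IsCoalgAntimorph τ)
    (k : ℕ) (p : Fin k → H) (hp : ∀ i, IsPrimitive R (p i)) (hpfix : ∀ i, τ (p i) = p i)
    (kb : ℕ) (pbar : Fin kb → H) (hpbar : ∀ j, IsPrimitive R (pbar j))
    (hpbarneg : ∀ j, τ (pbar j) = -(pbar j))
    (a : ℕ) (ha : 1 ≤ a) (haodd : Odd a) :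
    PsiPlus τ a
        ((List.ofFn pbar).prod *
          (∑ σ : Equiv.Perm (Fin k), (List.ofFn fun i => p (σ i)).prod)) =
      ((a : R)) ^ k •
        ((List.ofFn pbar).prod *
          (∑ σ : Equiv.Perm (Fin k), (List.ofFn fun i => p (σ i)).prod)) ∧
    PsiPlus τ a
        ((∑ σ : Equiv.Perm (Fin k), (List.ofFn fun i => p (σ i)).prod) *
          (List.ofFn pbar).prod) =
      ((a : R)) ^ k •
        ((∑ σ : Equiv.Perm (Fin k), (List.ofFn fun i => p (σ i)).prod) *
          (List.ofFn pbar).prod) := by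
  classical
  obtain ⟨m, hm⟩ := haodd
  have hPsi : PsiPlus τ a = (PsiAux τ (2 * m)).1 := by
    have h1 : a - 1 = 2 * m := by omega
    unfold PsiPlus
    rw [h1]
  set Ψ := (PsiAux τ (2 * m)).1 with hΨ
  -- the symmetrised sum P
  set P : H := ∑ σ : Equiv.Perm (Fin k), (List.ofFn fun i => p (σ i)).prod with hPdef
  -- pull-out properties for the minus primitives
  have hquad := fun j : Fin kb =>
    FRAux.quad_minus τ halgmul (hpbar j) (by rw [hpbarneg j]) m
  have hmemL : ∀ q ∈ List.ofFn pbar, ∀ x, Ψ (q * x) = q * Ψ x := by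
    intro q hqmem x
    obtain ⟨j, hj⟩ := List.mem_ofFn.mp hqmem
    rw [← hj]
    exact (hquad j).1 x
  have hmemR : ∀ q ∈ List.ofFn pbar, ∀ x, Ψ (x * q) = Ψ x * q := by
    intro q hqmem x
    obtain ⟨j, hj⟩ := List.mem_ofFn.mp hqmem
    rw [← hj]
    exact (hquad j).2.2.1 x
  -- eigenvalue property on P
  have hP : Ψ P = ((a : R)) ^ k • P := by
    have hsum_prim : ∀ S : Finset (Fin k), IsPrimitive R (∑ i ∈ S, p i) := by
      intro S
      unfold IsPrimitive
      rw [map_sum, Finset.sum_congr rfl fun i _ => hp i, Finset.sum_add_distrib,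
        ← TensorProduct.tmul_sum, ← TensorProduct.sum_tmul]
    have hsum_fix : ∀ S : Finset (Fin k), τ (∑ i ∈ S, p i) = ∑ i ∈ S, p i := by
      intro S
      rw [map_sum]
      exact Finset.sum_congr rfl fun i _ => hpfix i
    have heig : ∀ S : Finset (Fin k),
        Ψ ((∑ i ∈ S, p i) ^ k) = (((2 * m + 1 : ℕ) : R)) ^ k • (∑ i ∈ S, p i) ^ k := by
      intro S
      exact (FRAux.eigen_plus τ halg1 halgmul (hsum_prim S) (hsum_fix S) (2 * m) k).1
    have hcast : ((a : R)) = (((2 * m + 1 : ℕ) : R)) := by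
      rw [hm]
    rw [hPdef, FRAux.symm_decomp p, map_sum]
    rw [Finset.sum_congr rfl fun S _ => map_zsmul Ψ _ _]
    rw [Finset.sum_congr rfl fun S (_ : S ∈ _) => congrArg _ (heig S)]
    rw [Finset.smul_sum]
    refine Finset.sum_congr rfl fun S _ => ?_
    rw [hcast, smul_comm]
  constructor
  · rw [hPsi, FRAux.pull_left Ψ (List.ofFn pbar) hmemL P, hP, mul_smul_comm]
  · rw [hPsi, FRAux.pull_right Ψ (List.ofFn pbar) hmemR P, hP, smul_mul_assoc]
end

section
/- Let H be a bialgebra over a commutative ring R and let τ : H → H be an R-linear involution that is both an algebra morphism and a coalgebra morphism. Let a, b ≥ 1 be integers and assume that either H is commutative (xy = yx for all x, y ∈ H) and a is odd, or H is cocommutative (swap ∘ Δ = Δ) and b is odd. Then Ψ_a^+ ∘ Ψ_b^+ = Ψ_a^− ∘ Ψ_b^− = Ψ_{ab}^+ and Ψ_a^+ ∘ Ψ_b^− = Ψ_a^− ∘ Ψ_b^+ = Ψ_{ab}^−. -/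
open TensorProduct

set_option maxHeartbeats 1000000
set_option synthInstance.maxHeartbeats 400000

section Aux
variable {R H : Type*} [CommRing R] [Ring H] [Bialgebra R H]

open Coalgebra LinearMap

lemma aux_assoc_mul (f g h : H →ₗ[R] H) :
    LinearMap.mul' R H ∘ₗ map (LinearMap.mul' R H ∘ₗ map f g) h =
      (LinearMap.mul' R H ∘ₗ map f (LinearMap.mul' R H ∘ₗ map g h)) ∘ₗ
        (TensorProduct.assoc R H H H).toLinearMap := by
  apply TensorProduct.ext_threefold
  intro x y z
  simp [mul_assoc]

lemma convProd_assoc (f g h : H →ₗ[R] H) :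
    convProd (convProd f g) h = convProd f (convProd g h) := by
  ext x
  simp only [convProd, LinearMap.comp_apply]
  have c1 : LinearMap.mul' R H ∘ₗ map (LinearMap.mul' R H ∘ₗ map f g ∘ₗ comul) h =
      (LinearMap.mul' R H ∘ₗ map (LinearMap.mul' R H ∘ₗ map f g) h) ∘ₗ
        (comul (R := R) (A := H)).rTensor H := by
    apply TensorProduct.ext'
    intro u v
    simp
  have c2 : LinearMap.mul' R H ∘ₗ map f (LinearMap.mul' R H ∘ₗ map g h ∘ₗ comul) =
      (LinearMap.mul' R H ∘ₗ map f (LinearMap.mul' R H ∘ₗ map g h)) ∘ₗ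
        (comul (R := R) (A := H)).lTensor H := by
    apply TensorProduct.ext'
    intro u v
    simp
  calc (LinearMap.mul' R H) (map (LinearMap.mul' R H ∘ₗ map f g ∘ₗ comul) h (comul x))
      = (LinearMap.mul' R H ∘ₗ map (LinearMap.mul' R H ∘ₗ map f g ∘ₗ comul) h) (comul x) := rfl
    _ = ((LinearMap.mul' R H ∘ₗ map (LinearMap.mul' R H ∘ₗ map f g) h) ∘ₗ
          (comul (R := R) (A := H)).rTensor H) (comul x) := by rw [c1]
    _ = (LinearMap.mul' R H ∘ₗ map f (LinearMap.mul' R H ∘ₗ map g h))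
          ((TensorProduct.assoc R H H H) ((comul (R := R) (A := H)).rTensor H (comul x))) := by
        rw [LinearMap.comp_apply, aux_assoc_mul]; rfl
    _ = (LinearMap.mul' R H ∘ₗ map f (LinearMap.mul' R H ∘ₗ map g h))
          ((comul (R := R) (A := H)).lTensor H (comul x)) := by rw [Coalgebra.coassoc_apply]
    _ = (LinearMap.mul' R H) (map f (LinearMap.mul' R H ∘ₗ map g h ∘ₗ comul) (comul x)) := by
        simpa using LinearMap.congr_fun c2.symm (comul x)


lemma comp_convProd (f : H →ₗ[R] H) (hf : ∀ x y : H, f (x * y) = f x * f y)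
    (p q : H →ₗ[R] H) : f ∘ₗ convProd p q = convProd (f ∘ₗ p) (f ∘ₗ q) := by
  ext x
  simp only [convProd, LinearMap.comp_apply]
  have : ∀ t : H ⊗[R] H, f (LinearMap.mul' R H (map p q t)) =
      LinearMap.mul' R H (map (f ∘ₗ p) (f ∘ₗ q) t) := by
    intro t
    induction t using TensorProduct.induction_on with
    | zero => simp
    | tmul u v => simp [hf]
    | add s t hs ht => simp only [map_add, hs, ht]
  exact this _

lemma convProd_comp (g : H →ₗ[R] H)
    (hg : Coalgebra.comul ∘ₗ g = map g g ∘ₗ (Coalgebra.comul : H →ₗ[R] H ⊗[R] H))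
    (p q : H →ₗ[R] H) : convProd p q ∘ₗ g = convProd (p ∘ₗ g) (q ∘ₗ g) := by
  ext x
  simp only [convProd, LinearMap.comp_apply]
  have h1 : comul (R := R) (g x) = map g g (comul x) := by
    simpa using LinearMap.congr_fun hg x
  rw [h1]
  have : ∀ t : H ⊗[R] H, LinearMap.mul' R H (map p q (map g g t)) =
      LinearMap.mul' R H (map (p ∘ₗ g) (q ∘ₗ g) t) := by
    intro t
    induction t using TensorProduct.induction_on with
    | zero => simp
    | tmul u v => simp
    | add s t hs ht => simp only [map_add, hs, ht]
  exact this _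

lemma map_mul_of {f g : H →ₗ[R] H} (hf : ∀ x y : H, f (x * y) = f x * f y)
    (hg : ∀ x y : H, g (x * y) = g x * g y) (s t : H ⊗[R] H) :
    map f g (s * t) = map f g s * map f g t := by
  induction s using TensorProduct.induction_on with
  | zero => simp
  | add s₁ s₂ h₁ h₂ => simp only [add_mul, map_add, h₁, h₂]
  | tmul a b =>
    induction t using TensorProduct.induction_on with
    | zero => simp
    | add t₁ t₂ h₁ h₂ => simp only [mul_add, map_add, h₁, h₂]
    | tmul c d => simp [Algebra.TensorProduct.tmul_mul_tmul, hf, hg]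

lemma mul'_mul_of (hcomm : ∀ x y : H, x * y = y * x) (s t : H ⊗[R] H) :
    LinearMap.mul' R H (s * t) = LinearMap.mul' R H s * LinearMap.mul' R H t := by
  induction s using TensorProduct.induction_on with
  | zero => simp
  | add s₁ s₂ h₁ h₂ => simp only [add_mul, map_add, h₁, h₂]
  | tmul a b =>
    induction t using TensorProduct.induction_on with
    | zero => simp
    | add t₁ t₂ h₁ h₂ => simp only [mul_add, map_add, h₁, h₂]
    | tmul c d =>
      simp only [Algebra.TensorProduct.tmul_mul_tmul, LinearMap.mul'_apply]
      rw [mul_assoc a c, ← mul_assoc c b, hcomm c b, mul_assoc b c, ← mul_assoc a b]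

lemma convProd_mul (hcomm : ∀ x y : H, x * y = y * x) {f g : H →ₗ[R] H}
    (hf : ∀ x y : H, f (x * y) = f x * f y) (hg : ∀ x y : H, g (x * y) = g x * g y) :
    ∀ x y : H, convProd f g (x * y) = convProd f g x * convProd f g y := by
  intro x y
  simp only [convProd, LinearMap.comp_apply, Bialgebra.comul_mul,
    map_mul_of hf hg, mul'_mul_of hcomm]


lemma mul'_tensor :
    (LinearMap.mul' R (H ⊗[R] H)) =
      map (LinearMap.mul' R H) (LinearMap.mul' R H) ∘ₗ
        (tensorTensorTensorComm R H H H H).toLinearMap := by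
  apply TensorProduct.ext_fourfold'
  intro w x y z
  simp [Algebra.TensorProduct.tmul_mul_tmul]

lemma ttc_natural (p q r s : H →ₗ[R] H) :
    (tensorTensorTensorComm R H H H H).toLinearMap ∘ₗ map (map p q) (map r s) =
      map (map p r) (map q s) ∘ₗ (tensorTensorTensorComm R H H H H).toLinearMap := by
  apply TensorProduct.ext_fourfold'
  intro w x y z
  simp

lemma comul_mul'_fact (t : H ⊗[R] H) :
    Coalgebra.comul (R := R) (LinearMap.mul' R H t) =
      LinearMap.mul' R (H ⊗[R] H) (map Coalgebra.comul Coalgebra.comul t) := by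
  induction t using TensorProduct.induction_on with
  | zero => simp
  | tmul u v => simp [Bialgebra.comul_mul]
  | add s t hs ht => simp only [map_add, hs, ht]

lemma map_comul_comul (t : H ⊗[R] H) :
    map (Coalgebra.comul : H →ₗ[R] H ⊗[R] H) Coalgebra.comul t =
      LinearMap.lTensor (H ⊗[R] H) Coalgebra.comul
        ((Coalgebra.comul : H →ₗ[R] H ⊗[R] H).rTensor H t) := by
  induction t using TensorProduct.induction_on with
  | zero => simp
  | tmul u v => simp
  | add s t hs ht => simp only [map_add, hs, ht]

lemma pureN1 (u : H ⊗[R] (H ⊗[R] H)) :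
    LinearMap.lTensor (H ⊗[R] H) (Coalgebra.comul : H →ₗ[R] H ⊗[R] H)
        ((TensorProduct.assoc R H H H).symm u) =
      (TensorProduct.assoc R H H (H ⊗[R] H)).symm
        (LinearMap.lTensor H (LinearMap.lTensor H (Coalgebra.comul : H →ₗ[R] H ⊗[R] H)) u) := by
  induction u using TensorProduct.induction_on with
  | zero => simp
  | add s t hs ht => simp only [map_add, hs, ht]
  | tmul a w =>
    induction w using TensorProduct.induction_on with
    | zero => simp
    | add s t hs ht => simp only [tmul_add, map_add, hs, ht]
    | tmul b c => simp

lemma pureP (v : H ⊗[R] ((H ⊗[R] H) ⊗[R] H)) :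
    (tensorTensorTensorComm R H H H H)
        ((TensorProduct.assoc R H H (H ⊗[R] H)).symm
          (LinearMap.lTensor H (TensorProduct.assoc R H H H).toLinearMap
            (LinearMap.lTensor H ((TensorProduct.comm R H H).toLinearMap.rTensor H) v))) =
      (TensorProduct.assoc R H H (H ⊗[R] H)).symm
        (LinearMap.lTensor H (TensorProduct.assoc R H H H).toLinearMap v) := by
  induction v using TensorProduct.induction_on with
  | zero => simp
  | add s t hs ht => simp only [map_add, hs, ht]
  | tmul a w =>
    induction w using TensorProduct.induction_on with
    | zero => simp
    | add s t hs ht => simp only [tmul_add, map_add, hs, ht]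
    | tmul u d =>
      induction u using TensorProduct.induction_on with
      | zero => simp
      | add s t hs ht => simp only [add_tmul, tmul_add, map_add, hs, ht]
      | tmul b c => simp

lemma keyform (x : H) :
    map (Coalgebra.comul : H →ₗ[R] H ⊗[R] H) Coalgebra.comul (Coalgebra.comul x) =
      (TensorProduct.assoc R H H (H ⊗[R] H)).symm
        (LinearMap.lTensor H (TensorProduct.assoc R H H H).toLinearMap
          (LinearMap.lTensor H
            ((Coalgebra.comul : H →ₗ[R] H ⊗[R] H).rTensor H ∘ₗ Coalgebra.comul)
            (Coalgebra.comul x))) := by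
  rw [map_comul_comul, Coalgebra.coassoc_symm_apply (R := R) x |>.symm, pureN1]
  congr 1
  rw [← LinearMap.comp_apply, ← LinearMap.lTensor_comp, ← Coalgebra.coassoc,
    LinearMap.lTensor_comp, LinearMap.lTensor_comp, LinearMap.comp_apply]

lemma key_cocomm
    (hcc : (TensorProduct.comm R H H).toLinearMap ∘ₗ Coalgebra.comul =
      (Coalgebra.comul : H →ₗ[R] H ⊗[R] H)) (x : H) :
    (tensorTensorTensorComm R H H H H)
        (map (Coalgebra.comul : H →ₗ[R] H ⊗[R] H) Coalgebra.comul (Coalgebra.comul x)) =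
      map (Coalgebra.comul : H →ₗ[R] H ⊗[R] H) Coalgebra.comul (Coalgebra.comul x) := by
  have hins : ((Coalgebra.comul : H →ₗ[R] H ⊗[R] H).rTensor H ∘ₗ Coalgebra.comul) =
      (TensorProduct.comm R H H).toLinearMap.rTensor H ∘ₗ
        ((Coalgebra.comul : H →ₗ[R] H ⊗[R] H).rTensor H ∘ₗ Coalgebra.comul) := by
    rw [← LinearMap.comp_assoc, ← LinearMap.rTensor_comp, hcc]
  conv_lhs => rw [keyform, hins, LinearMap.lTensor_comp, LinearMap.comp_apply, pureP]
  rw [← keyform]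

lemma convProd_coalg
    (hcc : (TensorProduct.comm R H H).toLinearMap ∘ₗ Coalgebra.comul =
      (Coalgebra.comul : H →ₗ[R] H ⊗[R] H))
    {f g : H →ₗ[R] H}
    (hf : Coalgebra.comul ∘ₗ f = map f f ∘ₗ (Coalgebra.comul : H →ₗ[R] H ⊗[R] H))
    (hg : Coalgebra.comul ∘ₗ g = map g g ∘ₗ (Coalgebra.comul : H →ₗ[R] H ⊗[R] H)) :
    Coalgebra.comul ∘ₗ convProd f g =
      map (convProd f g) (convProd f g) ∘ₗ (Coalgebra.comul : H →ₗ[R] H ⊗[R] H) := by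
  have hf' : ∀ y : H, Coalgebra.comul (R := R) (f y) = map f f (Coalgebra.comul y) := fun y =>
    by simpa using LinearMap.congr_fun hf y
  have hg' : ∀ y : H, Coalgebra.comul (R := R) (g y) = map g g (Coalgebra.comul y) := fun y =>
    by simpa using LinearMap.congr_fun hg y
  have stepB : ∀ t : H ⊗[R] H,
      map (Coalgebra.comul : H →ₗ[R] H ⊗[R] H) Coalgebra.comul (map f g t) =
        map (map f f) (map g g)
          (map (Coalgebra.comul : H →ₗ[R] H ⊗[R] H) Coalgebra.comul t) := by
    intro t
    induction t using TensorProduct.induction_on with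
    | zero => simp
    | tmul u v => simp [hf', hg']
    | add s t hs ht => simp only [map_add, hs, ht]
  have stepD : ∀ t : H ⊗[R] H,
      map (convProd f g) (convProd f g) t =
        map (LinearMap.mul' R H) (LinearMap.mul' R H)
          (map (map f g) (map f g)
            (map (Coalgebra.comul : H →ₗ[R] H ⊗[R] H) Coalgebra.comul t)) := by
    intro t
    induction t using TensorProduct.induction_on with
    | zero => simp
    | tmul u v => simp [convProd]
    | add s t hs ht => simp only [map_add, hs, ht]
  ext x
  show Coalgebra.comul (LinearMap.mul' R H (map f g (Coalgebra.comul x))) =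
    map (convProd f g) (convProd f g) (Coalgebra.comul x)
  rw [stepD, comul_mul'_fact, stepB, _root_.mul'_tensor, LinearMap.comp_apply]
  congr 1
  have := LinearMap.congr_fun
    (ttc_natural (R := R) (H := H) f f g g)
    (map (Coalgebra.comul : H →ₗ[R] H ⊗[R] H) Coalgebra.comul (Coalgebra.comul x))
  simp only [LinearMap.comp_apply] at this
  rw [this]
  exact congrArg _ (key_cocomm hcc x)


section Psi

variable (τ : H →ₗ[R] H)

lemma tau_comp_PsiAux (hinv : ∀ x, τ (τ x) = x)
    (hm : ∀ x y : H, τ (x * y) = τ x * τ y) (n : ℕ) :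
    τ ∘ₗ (PsiAux τ n).1 = (PsiAux τ n).2 ∧ τ ∘ₗ (PsiAux τ n).2 = (PsiAux τ n).1 := by
  have ττ : τ ∘ₗ τ = LinearMap.id := LinearMap.ext hinv
  induction n with
  | zero =>
    refine ⟨?_, ?_⟩
    · show τ ∘ₗ LinearMap.id = τ
      exact LinearMap.comp_id τ
    · exact ττ
  | succ n ih =>
    refine ⟨?_, ?_⟩
    · show τ ∘ₗ convProd LinearMap.id (PsiAux τ n).2 = convProd τ (PsiAux τ n).1
      rw [comp_convProd τ hm, LinearMap.comp_id, ih.2]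
    · show τ ∘ₗ convProd τ (PsiAux τ n).1 = convProd LinearMap.id (PsiAux τ n).2
      rw [comp_convProd τ hm, ih.1, ττ]

lemma PsiAux_comp_tau (hinv : ∀ x, τ (τ x) = x)
    (hτc : Coalgebra.comul ∘ₗ τ = map τ τ ∘ₗ (Coalgebra.comul : H →ₗ[R] H ⊗[R] H)) (n : ℕ) :
    (PsiAux τ n).1 ∘ₗ τ = (PsiAux τ n).2 ∧ (PsiAux τ n).2 ∘ₗ τ = (PsiAux τ n).1 := by
  have ττ : τ ∘ₗ τ = LinearMap.id := LinearMap.ext hinv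
  induction n with
  | zero =>
    refine ⟨?_, ?_⟩
    · show LinearMap.id ∘ₗ τ = τ
      exact LinearMap.id_comp τ
    · exact ττ
  | succ n ih =>
    refine ⟨?_, ?_⟩
    · show convProd LinearMap.id (PsiAux τ n).2 ∘ₗ τ = convProd τ (PsiAux τ n).1
      rw [convProd_comp τ hτc, LinearMap.id_comp, ih.2]
    · show convProd τ (PsiAux τ n).1 ∘ₗ τ = convProd LinearMap.id (PsiAux τ n).2
      rw [convProd_comp τ hτc, ih.1, ττ]

lemma PsiAux_concat (n m : ℕ) :
    (Even n → convProd (PsiAux τ n).1 (PsiAux τ m).2 = (PsiAux τ (n + m + 1)).1 ∧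
        convProd (PsiAux τ n).2 (PsiAux τ m).1 = (PsiAux τ (n + m + 1)).2) ∧
      (Odd n → convProd (PsiAux τ n).1 (PsiAux τ m).1 = (PsiAux τ (n + m + 1)).1 ∧
        convProd (PsiAux τ n).2 (PsiAux τ m).2 = (PsiAux τ (n + m + 1)).2) := by
  induction n with
  | zero =>
    refine ⟨fun _ => ⟨?_, ?_⟩, fun h => absurd h (by simp)⟩
    · rw [Nat.zero_add]; rfl
    · rw [Nat.zero_add]; rfl
  | succ n ih =>
    have hidx : n + 1 + m + 1 = (n + m + 1) + 1 := by omega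
    constructor
    · intro he
      have ho : Odd n := Nat.not_even_iff_odd.mp (Nat.even_add_one.mp he)
      refine ⟨?_, ?_⟩
      · show convProd (convProd LinearMap.id (PsiAux τ n).2) (PsiAux τ m).2 = _
        rw [convProd_assoc, (ih.2 ho).2, hidx]
        rfl
      · show convProd (convProd τ (PsiAux τ n).1) (PsiAux τ m).1 = _
        rw [convProd_assoc, (ih.2 ho).1, hidx]
        rfl
    · intro ho
      have he : Even n := Nat.not_odd_iff_even.mp (Nat.odd_add_one.mp ho)
      refine ⟨?_, ?_⟩
      · show convProd (convProd LinearMap.id (PsiAux τ n).2) (PsiAux τ m).1 = _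
        rw [convProd_assoc, (ih.1 he).2, hidx]
        rfl
      · show convProd (convProd τ (PsiAux τ n).1) (PsiAux τ m).2 = _
        rw [convProd_assoc, (ih.1 he).1, hidx]
        rfl

lemma PsiAux_mul (hcomm : ∀ x y : H, x * y = y * x)
    (hm : ∀ x y : H, τ (x * y) = τ x * τ y) (n : ℕ) :
    (∀ x y : H, (PsiAux τ n).1 (x * y) = (PsiAux τ n).1 x * (PsiAux τ n).1 y) ∧
      (∀ x y : H, (PsiAux τ n).2 (x * y) = (PsiAux τ n).2 x * (PsiAux τ n).2 y) := by
  induction n with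
  | zero => exact ⟨fun x y => rfl, hm⟩
  | succ n ih =>
    exact ⟨convProd_mul hcomm (fun x y => rfl) ih.2,
      convProd_mul hcomm hm ih.1⟩

lemma PsiAux_coalg
    (hcc : (TensorProduct.comm R H H).toLinearMap ∘ₗ Coalgebra.comul =
      (Coalgebra.comul : H →ₗ[R] H ⊗[R] H))
    (hτc : Coalgebra.comul ∘ₗ τ = map τ τ ∘ₗ (Coalgebra.comul : H →ₗ[R] H ⊗[R] H)) (n : ℕ) :
    Coalgebra.comul ∘ₗ (PsiAux τ n).1 =
        map (PsiAux τ n).1 (PsiAux τ n).1 ∘ₗ (Coalgebra.comul : H →ₗ[R] H ⊗[R] H) ∧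
      Coalgebra.comul ∘ₗ (PsiAux τ n).2 =
        map (PsiAux τ n).2 (PsiAux τ n).2 ∘ₗ (Coalgebra.comul : H →ₗ[R] H ⊗[R] H) := by
  have hid : Coalgebra.comul ∘ₗ (LinearMap.id : H →ₗ[R] H) =
      map LinearMap.id LinearMap.id ∘ₗ (Coalgebra.comul : H →ₗ[R] H ⊗[R] H) := by
    rw [map_id, LinearMap.comp_id, LinearMap.id_comp]
  induction n with
  | zero => exact ⟨hid, hτc⟩
  | succ n ih =>
    exact ⟨convProd_coalg hcc hid ih.2, convProd_coalg hcc hτc ih.1⟩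


lemma comm_case (hcomm : ∀ x y : H, x * y = y * x) (hinv : ∀ x, τ (τ x) = x)
    (hm : ∀ x y : H, τ (x * y) = τ x * τ y)
    (hτc : Coalgebra.comul ∘ₗ τ = map τ τ ∘ₗ (Coalgebra.comul : H →ₗ[R] H ⊗[R] H))
    (n : ℕ) (hn : Even n) (m : ℕ) :
    (PsiAux τ n).1 ∘ₗ (PsiAux τ m).1 = (PsiAux τ (n * m + n + m)).1 ∧
      (PsiAux τ n).2 ∘ₗ (PsiAux τ m).2 = (PsiAux τ (n * m + n + m)).1 ∧
      (PsiAux τ n).1 ∘ₗ (PsiAux τ m).2 = (PsiAux τ (n * m + n + m)).2 ∧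
      (PsiAux τ n).2 ∘ₗ (PsiAux τ m).1 = (PsiAux τ (n * m + n + m)).2 := by
  induction m with
  | zero =>
    have h0 : n * 0 + n + 0 = n := by omega
    rw [h0]
    exact ⟨LinearMap.comp_id _, (PsiAux_comp_tau τ hinv hτc n).2,
      (PsiAux_comp_tau τ hinv hτc n).1, LinearMap.comp_id _⟩
  | succ m ih =>
    obtain ⟨ih1, ih2, ih3, ih4⟩ := ih
    have hidx : n * (m + 1) + n + (m + 1) = n + (n * m + n + m) + 1 := by ring
    rw [hidx]
    have hAmul := (PsiAux_mul τ hcomm hm n).1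
    have hBmul := (PsiAux_mul τ hcomm hm n).2
    refine ⟨?_, ?_, ?_, ?_⟩
    · show (PsiAux τ n).1 ∘ₗ convProd LinearMap.id (PsiAux τ m).2 = _
      rw [comp_convProd _ hAmul, LinearMap.comp_id, ih3]
      exact ((PsiAux_concat τ n (n * m + n + m)).1 hn).1
    · show (PsiAux τ n).2 ∘ₗ convProd τ (PsiAux τ m).1 = _
      rw [comp_convProd _ hBmul, (PsiAux_comp_tau τ hinv hτc n).2, ih4]
      exact ((PsiAux_concat τ n (n * m + n + m)).1 hn).1
    · show (PsiAux τ n).1 ∘ₗ convProd τ (PsiAux τ m).1 = _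
      rw [comp_convProd _ hAmul, (PsiAux_comp_tau τ hinv hτc n).1, ih1]
      exact ((PsiAux_concat τ n (n * m + n + m)).1 hn).2
    · show (PsiAux τ n).2 ∘ₗ convProd LinearMap.id (PsiAux τ m).2 = _
      rw [comp_convProd _ hBmul, LinearMap.comp_id, ih2]
      exact ((PsiAux_concat τ n (n * m + n + m)).1 hn).2

lemma cocomm_case
    (hcc : (TensorProduct.comm R H H).toLinearMap ∘ₗ Coalgebra.comul =
      (Coalgebra.comul : H →ₗ[R] H ⊗[R] H))
    (hinv : ∀ x, τ (τ x) = x) (hm : ∀ x y : H, τ (x * y) = τ x * τ y)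
    (hτc : Coalgebra.comul ∘ₗ τ = map τ τ ∘ₗ (Coalgebra.comul : H →ₗ[R] H ⊗[R] H))
    (m : ℕ) (hme : Even m) (n : ℕ) :
    (PsiAux τ n).1 ∘ₗ (PsiAux τ m).1 = (PsiAux τ (n * m + n + m)).1 ∧
      (PsiAux τ n).2 ∘ₗ (PsiAux τ m).2 = (PsiAux τ (n * m + n + m)).1 ∧
      (PsiAux τ n).1 ∘ₗ (PsiAux τ m).2 = (PsiAux τ (n * m + n + m)).2 ∧
      (PsiAux τ n).2 ∘ₗ (PsiAux τ m).1 = (PsiAux τ (n * m + n + m)).2 := by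
  induction n with
  | zero =>
    have h0 : 0 * m + 0 + m = m := by omega
    rw [h0]
    exact ⟨LinearMap.id_comp _, (tau_comp_PsiAux τ hinv hm m).2,
      LinearMap.id_comp _, (tau_comp_PsiAux τ hinv hm m).1⟩
  | succ n ih =>
    obtain ⟨ih1, ih2, ih3, ih4⟩ := ih
    have hidx : (n + 1) * m + (n + 1) + m = m + (n * m + n + m) + 1 := by ring
    rw [hidx]
    have hAc := (PsiAux_coalg τ hcc hτc m).1
    have hBc := (PsiAux_coalg τ hcc hτc m).2
    refine ⟨?_, ?_, ?_, ?_⟩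
    · show convProd LinearMap.id (PsiAux τ n).2 ∘ₗ (PsiAux τ m).1 = _
      rw [convProd_comp _ hAc, LinearMap.id_comp, ih4]
      exact ((PsiAux_concat τ m (n * m + n + m)).1 hme).1
    · show convProd τ (PsiAux τ n).1 ∘ₗ (PsiAux τ m).2 = _
      rw [convProd_comp _ hBc, (tau_comp_PsiAux τ hinv hm m).2, ih3]
      exact ((PsiAux_concat τ m (n * m + n + m)).1 hme).1
    · show convProd LinearMap.id (PsiAux τ n).2 ∘ₗ (PsiAux τ m).2 = _
      rw [convProd_comp _ hBc, LinearMap.id_comp, ih2]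
      exact ((PsiAux_concat τ m (n * m + n + m)).1 hme).2
    · show convProd τ (PsiAux τ n).1 ∘ₗ (PsiAux τ m).1 = _
      rw [convProd_comp _ hAc, (tau_comp_PsiAux τ hinv hm m).1, ih1]
      exact ((PsiAux_concat τ m (n * m + n + m)).1 hme).2

end Psi

end Aux

/-- `τ` a linear involution on a bialgebra `H` that is both an algebra
morphism and a coalgebra morphism. If either `H` is commutative and `a` is odd, or `H` is
cocommutative and `b` is odd, then `Ψ_a^+ ∘ Ψ_b^+ = Ψ_a^− ∘ Ψ_b^− = Ψ_{ab}^+` and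
`Ψ_a^+ ∘ Ψ_b^− = Ψ_a^− ∘ Ψ_b^+ = Ψ_{ab}^−`. -/
theorem hyperoctahedral_riffle_composition
    {R H : Type*} [CommRing R] [Ring H] [Bialgebra R H]
    (τ : H →ₗ[R] H)
    (hinv : ∀ x, τ (τ x) = x)
    (halg1 : τ 1 = 1) (halgmul : ∀ x y : H, τ (x * y) = τ x * τ y)
    (hco : IsCoalgMorph τ)
    (a b : ℕ) (ha : 1 ≤ a) (hb : 1 ≤ b)
    (hcase :
      ((∀ x y : H, x * y = y * x) ∧ Odd a) ∨
      (((TensorProduct.comm R H H).toLinearMap ∘ₗ Coalgebra.comul =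
          (Coalgebra.comul : H →ₗ[R] H ⊗[R] H)) ∧ Odd b)) :
    PsiPlus τ a ∘ₗ PsiPlus τ b = PsiPlus τ (a * b) ∧
    PsiMinus τ a ∘ₗ PsiMinus τ b = PsiPlus τ (a * b) ∧
    PsiPlus τ a ∘ₗ PsiMinus τ b = PsiMinus τ (a * b) ∧
    PsiMinus τ a ∘ₗ PsiPlus τ b = PsiMinus τ (a * b) := by
  obtain ⟨hτc, -⟩ := hco
  obtain ⟨n, rfl⟩ : ∃ n, a = n + 1 := ⟨a - 1, by omega⟩
  obtain ⟨m, rfl⟩ : ∃ m, b = m + 1 := ⟨b - 1, by omega⟩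
  have hab : (n + 1) * (m + 1) - 1 = n * m + n + m := by
    rw [show (n + 1) * (m + 1) = n * m + n + m + 1 from by ring, Nat.add_sub_cancel]
  simp only [PsiPlus, PsiMinus, Nat.add_sub_cancel, hab]
  rcases hcase with ⟨hcomm, hodd⟩ | ⟨hcc, hodd⟩
  · have hn : Even n := Nat.not_odd_iff_even.mp (Nat.odd_add_one.mp hodd)
    exact comm_case τ hcomm hinv halgmul hτc n hn m
  · have hme : Even m := Nat.not_odd_iff_even.mp (Nat.odd_add_one.mp hodd)
    exact cocomm_case τ hcc hinv halgmul hτc m hme n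
end

section
/- For all natural numbers n, k, k̄ with k + k̄ ≤ n, one has C(n, k, k̄) = 2^{n−k−k̄} · c(n, k+k̄) · binom(k+k̄, k). -/
/-- The order `≺` on signed letters: `x ≺ y` iff `|x| < |y|`, or `|x| = |y|` with `x`
barred (negative) and `y` unbarred. -/
def SPrec (x y : ℤ) : Prop := x.natAbs < y.natAbs ∨ (x.natAbs = y.natAbs ∧ x < y)

/-- `w : Fin n → ℤ` is a signed permutation of `n`: each entry has absolute value in
`{1,…,n}` and the absolute values are pairwise distinct (hence a permutation of `1,…,n`);
in particular every entry is nonzero. -/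
def IsSignedPerm {n : ℕ} (w : Fin n → ℤ) : Prop :=
  (∀ t, 1 ≤ (w t).natAbs ∧ (w t).natAbs ≤ n) ∧
    Function.Injective fun t => (w t).natAbs

/-- Position `t` is a left-to-right minimum of `w`: `w t ≺ w s` for all `s < t`. -/
def IsLRMin {n : ℕ} (w : Fin n → ℤ) (t : Fin n) : Prop :=
  ∀ s, s < t → SPrec (w t) (w s)

/-- Position `t` lies in the Lyndon factor beginning at position `m`: `m ≤ t` and no
left-to-right minimum occurs strictly between `m` (exclusive) and `t` (inclusive). -/
def InFactor {n : ℕ} (w : Fin n → ℤ) (m t : Fin n) : Prop :=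
  m ≤ t ∧ ∀ s, m < s → s ≤ t → ¬ IsLRMin w s

/-- The number of barred (negative) entries in the Lyndon factor of `w` beginning at `m`. -/
noncomputable def barredCount {n : ℕ} (w : Fin n → ℤ) (m : Fin n) : ℕ :=
  Nat.card { t : Fin n // InFactor w m t ∧ w t < 0 }

/-- The number of Lyndon factors of `w` with an odd number of barred entries. -/
noncomputable def numOddFactors {n : ℕ} (w : Fin n → ℤ) : ℕ :=
  Nat.card { m : Fin n // IsLRMin w m ∧ Odd (barredCount w m) }

/-- The number of Lyndon factors of `w` with an even number of barred entries. -/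
noncomputable def numEvenFactors {n : ℕ} (w : Fin n → ℤ) : ℕ :=
  Nat.card { m : Fin n // IsLRMin w m ∧ Even (barredCount w m) }

/-- `C(n, k, k̄)`: the number of signed permutations of `n` whose Lyndon factorization has
exactly `k` factors with an odd number of barred entries and exactly `k̄` factors with an
even number of barred entries. -/
noncomputable def bigC (n k kb : ℕ) : ℕ :=
  Nat.card { w : Fin n → ℤ // IsSignedPerm w ∧ numOddFactors w = k ∧ numEvenFactors w = kb }

/-- `c(n, k)`: the signless Stirling number of the first kind, i.e. the number of
permutations of `(1,…,n)` with exactly `k` left-to-right minima. -/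
noncomputable def littleC (n k : ℕ) : ℕ :=
  Nat.card { σ : Equiv.Perm (Fin n) //
    Nat.card { t : Fin n // ∀ s, s < t → σ t < σ s } = k }


open Finset

section Abstract

variable {α : Type*} [Fintype α] [DecidableEq α]

def cntb (f : α → α) (ε : α → Bool) (m : α) : ℕ :=
  (univ.filter fun t => f t = m ∧ ε t = true).card

def cntRest (M : Finset α) (f : α → α) (ε : α → Bool) (m : α) : ℕ :=
  (univ.filter fun t => t ∉ M ∧ f t = m ∧ ε t = true).card

lemma cntRest_congr (M : Finset α) (f : α → α) {ε ε' : α → Bool}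
    (h : ∀ t ∉ M, ε t = ε' t) (m : α) : cntRest M f ε m = cntRest M f ε' m := by
  unfold cntRest
  congr 1
  apply filter_congr
  intro t _
  by_cases hM : t ∈ M
  · simp [hM]
  · simp [hM, h t hM]

lemma cnt_split (M : Finset α) (f : α → α) (hf1 : ∀ m ∈ M, f m = m)
    (ε : α → Bool) (m : α) (hm : m ∈ M) :
    cntb f ε m = (if ε m then 1 else 0) + cntRest M f ε m := by
  unfold cntb cntRest
  have hsplit := card_filter_add_card_filter_not
    (s := univ.filter fun t => f t = m ∧ ε t = true) (p := fun t => t ∈ M)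
  rw [filter_filter, filter_filter] at hsplit
  have h1 : (univ.filter fun t => (f t = m ∧ ε t = true) ∧ t ∈ M)
      = if ε m then {m} else ∅ := by
    ext t
    constructor
    · intro ht
      simp only [mem_filter, mem_univ, true_and] at ht
      rcases ht with ⟨⟨hft, hεt⟩, htM⟩
      have : t = m := by rw [← hf1 t htM]; exact hft
      subst this
      simp [hεt]
    · intro ht
      by_cases hε : ε m = true
      · rw [if_pos hε, mem_singleton] at ht
        simp only [mem_filter, mem_univ, true_and, ht]
        exact ⟨⟨hf1 _ hm, hε⟩, hm⟩
      · rw [if_neg hε] at ht; simp at ht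
  have h2 : (univ.filter fun t => (f t = m ∧ ε t = true) ∧ t ∈ M).card
      = if ε m then 1 else 0 := by
    rw [h1]; by_cases hε : ε m <;> simp [hε]
  have h3 : (univ.filter fun t => (f t = m ∧ ε t = true) ∧ t ∉ M)
      = (univ.filter fun t => t ∉ M ∧ f t = m ∧ ε t = true) := by
    apply filter_congr; intro t _; tauto
  rw [h2, h3] at hsplit
  omega

lemma decide_odd_add (c : Bool) (r : ℕ) :
    decide (Odd ((if c then 1 else 0) + r)) = xor c (decide (Odd r)) := by
  cases c
  · simp
  · simp only [if_true, Bool.true_xor]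
    have h1 : Odd (1 + r) ↔ ¬ Odd r := by
      rw [Nat.odd_add]; constructor
      · intro h hr; exact (Nat.not_even_iff_odd.mpr hr) (h.mp odd_one)
      · intro h; exact iff_of_true odd_one (Nat.not_odd_iff_even.mp h)
    by_cases h : Odd r <;> simp [h, h1]


/-- extend a function on the complement of `M` by `false` on `M`. -/
def extd (M : Finset α) (η : {x // x ∉ M} → Bool) : α → Bool :=
  fun t => if h : t ∉ M then η ⟨t, h⟩ else false

def phiFwd (M : Finset α) (f : α → α) (ε : α → Bool) :
    ({x // x ∈ M} → Bool) × ({x // x ∉ M} → Bool) :=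
  (fun m => decide (Odd (cntb f ε m.1)), fun t => ε t.1)

def phiBwd (M : Finset α) (f : α → α)
    (y : ({x // x ∈ M} → Bool) × ({x // x ∉ M} → Bool)) : α → Bool :=
  fun t =>
    if h : t ∈ M then xor (y.1 ⟨t, h⟩) (decide (Odd (cntRest M f (extd M y.2) t)))
    else y.2 ⟨t, h⟩

lemma phiBwd_off (M : Finset α) (f : α → α) (y) (s : α) (hs : s ∉ M) :
    phiBwd M f y s = extd M y.2 s := by
  unfold phiBwd extd
  rw [dif_neg hs, dif_pos hs]

lemma phiBwd_on (M : Finset α) (f : α → α) (y) (s : α) (hs : s ∈ M) :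
    phiBwd M f y s = xor (y.1 ⟨s, hs⟩) (decide (Odd (cntRest M f (extd M y.2) s))) := by
  unfold phiBwd
  rw [dif_pos hs]

/-- The key parity equivalence. -/
def Phi (M : Finset α) (f : α → α) (hf1 : ∀ m ∈ M, f m = m) :
    (α → Bool) ≃ ({x // x ∈ M} → Bool) × ({x // x ∉ M} → Bool) where
  toFun := phiFwd M f
  invFun := phiBwd M f
  left_inv := by
    intro ε
    funext t
    by_cases h : t ∈ M
    · rw [phiBwd_on M f _ t h]
      have h1 : cntRest M f (extd M (phiFwd M f ε).2) t = cntRest M f ε t := by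
        apply cntRest_congr
        intro s hs
        simp [extd, dif_pos hs, phiFwd]
      show xor (decide (Odd (cntb f ε t))) _ = ε t
      rw [h1, cnt_split M f hf1 ε t h, decide_odd_add]
      cases hε : ε t <;> simp [hε]
    · rw [phiBwd_off M f _ t h]
      simp [extd, dif_pos h, phiFwd]
  right_inv := by
    rintro ⟨p, η⟩
    have hoff : ∀ s, s ∉ M → phiBwd M f (p, η) s = extd M η s := fun s hs =>
      phiBwd_off M f (p, η) s hs
    refine Prod.ext ?_ ?_
    · funext m
      show decide (Odd (cntb f (phiBwd M f (p, η)) m.1)) = p m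
      have hr : cntRest M f (phiBwd M f (p, η)) m.1 = cntRest M f (extd M η) m.1 :=
        cntRest_congr M f hoff m.1
      rw [cnt_split M f hf1 _ m.1 m.2, decide_odd_add, hr, phiBwd_on M f _ m.1 m.2]
      cases hp : p m <;> cases hb : decide (Odd (cntRest M f (extd M η) m.1)) <;>
        simp_all
    · funext t
      show phiBwd M f (p, η) t.1 = η t
      rw [phiBwd_off M f _ t.1 t.2]
      simp [extd, dif_pos t.2]


lemma ncard_filter {β : Type*} [Fintype β] (p : β → Prop) [DecidablePred p] :
    Nat.card {x // p x} = (univ.filter p).card := by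
  rw [Nat.card_eq_fintype_card, Fintype.card_subtype]

lemma card_filter_subtype (M : Finset α) (Q : α → Prop) [DecidablePred Q] :
    (univ.filter fun m : {x // x ∈ M} => Q m.1).card = (M.filter Q).card := by
  rw [← ncard_filter]
  rw [Nat.card_congr (Equiv.subtypeSubtypeEquivSubtypeInter (· ∈ M) Q)]
  rw [ncard_filter]
  rw [← filter_filter]
  congr 1
  ext x
  simp

lemma bool_count (B : Type*) [Fintype B] [DecidableEq B] (k : ℕ) :
    Nat.card {p : B → Bool // (univ.filter fun b => p b = true).card = k}
      = (Fintype.card B).choose k := by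
  have e : {p : B → Bool // (univ.filter fun b => p b = true).card = k}
      ≃ {s : Finset B // s.card = k} :=
    { toFun := fun p => ⟨univ.filter fun b => p.1 b = true, p.2⟩
      invFun := fun s => ⟨fun b => decide (b ∈ s.1), by simpa using s.2⟩
      left_inv := by
        rintro ⟨p, hp⟩
        ext b
        simp
      right_inv := by
        rintro ⟨s, hs⟩
        ext b
        simp }
  rw [Nat.card_congr e, ncard_filter]
  rw [← Finset.powerset_univ, ← Finset.powersetCard_eq_filter, Finset.card_powersetCard,
    Finset.card_univ]

lemma abstract_count (M : Finset α) (f : α → α)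
    (hf1 : ∀ m ∈ M, f m = m) (k kb : ℕ) :
    Nat.card {ε : α → Bool //
        (M.filter fun m => Odd (cntb f ε m)).card = k ∧
        (M.filter fun m => Even (cntb f ε m)).card = kb}
    = if M.card = k + kb then (k + kb).choose k * 2 ^ (Fintype.card α - (k + kb)) else 0 := by
  have hsum : ∀ ε : α → Bool,
      (M.filter fun m => Odd (cntb f ε m)).card
        + (M.filter fun m => Even (cntb f ε m)).card = M.card := by
    intro ε
    have := card_filter_add_card_filter_not (s := M)
      (p := fun m => Odd (cntb f ε m))
    rw [← this]
    congr 2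
    apply filter_congr
    intro m _
    simp [Nat.not_odd_iff_even]
  by_cases hM : M.card = k + kb
  · rw [if_pos hM]
    have e1 : {ε : α → Bool //
        (M.filter fun m => Odd (cntb f ε m)).card = k ∧
        (M.filter fun m => Even (cntb f ε m)).card = kb}
        ≃ {ε : α → Bool // (M.filter fun m => Odd (cntb f ε m)).card = k} :=
      Equiv.subtypeEquivRight (fun ε => by
        constructor
        · rintro ⟨h1, _⟩; exact h1
        · intro h1
          refine ⟨h1, ?_⟩
          have := hsum ε
          omega)
    rw [Nat.card_congr e1]
    have e2 : {ε : α → Bool // (M.filter fun m => Odd (cntb f ε m)).card = k}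
        ≃ {y : ({x // x ∈ M} → Bool) × ({x // x ∉ M} → Bool) //
            (univ.filter fun m : {x // x ∈ M} => y.1 m = true).card = k} := by
      refine Equiv.subtypeEquiv (Phi M f hf1) (fun ε => ?_)
      have : ∀ m : {x // x ∈ M}, ((Phi M f hf1) ε).1 m = decide (Odd (cntb f ε m.1)) := by
        intro m; rfl
      have key : (univ.filter fun m : {x // x ∈ M} => ((Phi M f hf1) ε).1 m = true).card
          = (M.filter fun m => Odd (cntb f ε m)).card := by
        simp only [this]
        rw [card_filter_subtype M (fun a => decide (Odd (cntb f ε a)) = true)]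
        congr 1
        apply filter_congr
        intro m _
        simp
      rw [key]
    rw [Nat.card_congr e2]
    rw [Nat.card_congr (Equiv.prodSubtypeFstEquivSubtypeProd
      (p := fun p : {x // x ∈ M} → Bool => (univ.filter fun m => p m = true).card = k))]
    rw [Nat.card_prod, bool_count]
    rw [Nat.card_eq_fintype_card (α := {x // x ∉ M} → Bool)]
    rw [Fintype.card_fun]
    have hcompl : Fintype.card {x // x ∉ M} = Fintype.card α - (k + kb) := by
      have h1 : Fintype.card {x // ¬ x ∈ M} = Fintype.card α - Fintype.card {x // x ∈ M} :=
        Fintype.card_subtype_compl _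
      have h2 : Fintype.card {x // x ∈ M} = M.card := Fintype.card_coe M
      simp only [h1, h2, hM]
    have hcard : Fintype.card {x // x ∈ M} = M.card := Fintype.card_coe M
    rw [hcard, hM, Fintype.card_bool]
    congr 1
    rw [hcompl]
  · rw [if_neg hM]
    have : IsEmpty {ε : α → Bool //
        (M.filter fun m => Odd (cntb f ε m)).card = k ∧
        (M.filter fun m => Even (cntb f ε m)).card = kb} := by
      constructor
      rintro ⟨ε, h1, h2⟩
      exact hM (by rw [← hsum ε, h1, h2])
    exact Nat.card_of_isEmpty

end Abstract

section FinSide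

open Equiv

variable {n : ℕ}

/-- left-to-right minima of a permutation of `Fin n`. -/
def Lmin (σ : Equiv.Perm (Fin n)) (t : Fin n) : Prop := ∀ s, s < t → σ t < σ s

instance (σ : Equiv.Perm (Fin n)) : DecidablePred (Lmin σ) := fun t => by
  unfold Lmin; infer_instance

/-- the start of the Lyndon factor containing `t`. -/
def fstart (σ : Equiv.Perm (Fin n)) (t : Fin n) : Fin n :=
  if h : (univ.filter fun m => m ≤ t ∧ Lmin σ m).Nonempty
  then (univ.filter fun m => m ≤ t ∧ Lmin σ m).max' h else t

lemma fstart_nonempty (σ : Equiv.Perm (Fin n)) (t : Fin n) :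
    (univ.filter fun m => m ≤ t ∧ Lmin σ m).Nonempty := by
  refine ⟨⟨0, t.pos⟩, ?_⟩
  simp only [mem_filter, mem_univ, true_and]
  constructor
  · exact Fin.mk_le_of_le_val (Nat.zero_le _)
  · intro s hs
    exact absurd hs (by simp [Fin.lt_def])

lemma fstart_spec (σ : Equiv.Perm (Fin n)) (t : Fin n) :
    fstart σ t ≤ t ∧ Lmin σ (fstart σ t) := by
  unfold fstart
  rw [dif_pos (fstart_nonempty σ t)]
  have := Finset.max'_mem _ (fstart_nonempty σ t)
  simp only [mem_filter, mem_univ, true_and] at this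
  exact this

lemma le_fstart (σ : Equiv.Perm (Fin n)) {m t : Fin n} (h1 : m ≤ t) (h2 : Lmin σ m) :
    m ≤ fstart σ t := by
  unfold fstart
  rw [dif_pos (fstart_nonempty σ t)]
  exact Finset.le_max' _ m (by simp [h1, h2])

lemma fstart_eq_iff (σ : Equiv.Perm (Fin n)) {m : Fin n} (hm : Lmin σ m) (t : Fin n) :
    fstart σ t = m ↔ (m ≤ t ∧ ∀ s, m < s → s ≤ t → ¬ Lmin σ s) := by
  constructor
  · intro hf
    have hs := fstart_spec σ t
    rw [hf] at hs
    refine ⟨hs.1, ?_⟩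
    intro s hms hst hLs
    have : s ≤ fstart σ t := le_fstart σ hst hLs
    rw [hf] at this
    exact absurd hms (by exact not_lt.mpr this)
  · rintro ⟨hmt, hno⟩
    have hs := fstart_spec σ t
    have hle : m ≤ fstart σ t := le_fstart σ hmt hm
    rcases lt_or_eq_of_le hle with hlt | heq
    · exact absurd hs.2 (hno _ hlt hs.1)
    · exact heq.symm

lemma fstart_mem_lmin (σ : Equiv.Perm (Fin n)) (t : Fin n) : Lmin σ (fstart σ t) :=
  (fstart_spec σ t).2

lemma fstart_fix (σ : Equiv.Perm (Fin n)) {m : Fin n} (hm : Lmin σ m) : fstart σ m = m :=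
  (fstart_eq_iff σ hm m).mpr ⟨le_refl m, fun s h1 h2 _ => absurd (lt_of_lt_of_le h1 h2) (lt_irrefl m)⟩

/-- building a signed permutation from a permutation and a sign vector. -/
def toW (σ : Equiv.Perm (Fin n)) (ε : Fin n → Bool) : Fin n → ℤ :=
  fun t => (if ε t then -1 else 1) * ((σ t : ℕ) + 1 : ℤ)

lemma toW_natAbs (σ : Equiv.Perm (Fin n)) (ε : Fin n → Bool) (t : Fin n) :
    (toW σ ε t).natAbs = (σ t : ℕ) + 1 := by
  unfold toW
  cases hε : ε t <;> simp <;> omega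

lemma toW_neg_iff (σ : Equiv.Perm (Fin n)) (ε : Fin n → Bool) (t : Fin n) :
    toW σ ε t < 0 ↔ ε t = true := by
  unfold toW
  have hpos : (0 : ℤ) < ((σ t : ℕ) + 1 : ℤ) := by positivity
  cases hε : ε t <;> simp <;> omega

lemma isSignedPerm_toW (σ : Equiv.Perm (Fin n)) (ε : Fin n → Bool) :
    IsSignedPerm (toW σ ε) := by
  constructor
  · intro t
    rw [toW_natAbs]
    have := (σ t).isLt
    omega
  · intro a b hab
    simp only [toW_natAbs] at hab
    have : σ a = σ b := Fin.ext (by omega)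
    exact σ.injective this

lemma isLRMin_toW (σ : Equiv.Perm (Fin n)) (ε : Fin n → Bool) (m : Fin n) :
    IsLRMin (toW σ ε) m ↔ Lmin σ m := by
  unfold IsLRMin Lmin
  apply forall_congr'
  intro s
  apply imp_congr_right
  intro hs
  have hne : σ m ≠ σ s := fun hc => (ne_of_gt hs) (σ.injective hc)
  have hne' : ((σ m : ℕ) + 1) ≠ ((σ s : ℕ) + 1) := by
    intro hc
    exact hne (Fin.ext (by omega))
  unfold SPrec
  rw [toW_natAbs, toW_natAbs]
  constructor
  · rintro (h | ⟨heq, _⟩)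
    · exact Fin.lt_def.mpr (by omega)
    · exact absurd heq hne'
  · intro h
    exact Or.inl (by have := Fin.lt_def.mp h; omega)

lemma barredCount_toW (σ : Equiv.Perm (Fin n)) (ε : Fin n → Bool) {m : Fin n}
    (hm : Lmin σ m) : barredCount (toW σ ε) m = cntb (fstart σ) ε m := by
  unfold barredCount cntb
  rw [Nat.card_congr (Equiv.subtypeEquivRight (q := fun t => fstart σ t = m ∧ ε t = true)
    (fun t => ?_))]
  · exact ncard_filter _
  · show _ ↔ (fstart σ t = m ∧ ε t = true)
    unfold InFactor
    rw [toW_neg_iff, fstart_eq_iff σ hm t]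
    constructor
    · rintro ⟨⟨h1, h2⟩, h3⟩
      exact ⟨⟨h1, fun s hs1 hs2 hLs => h2 s hs1 hs2 ((isLRMin_toW σ ε s).mpr hLs)⟩, h3⟩
    · rintro ⟨⟨h1, h2⟩, h3⟩
      exact ⟨⟨h1, fun s hs1 hs2 hLs => h2 s hs1 hs2 ((isLRMin_toW σ ε s).mp hLs)⟩, h3⟩

lemma numOdd_toW (σ : Equiv.Perm (Fin n)) (ε : Fin n → Bool) :
    numOddFactors (toW σ ε)
      = ((univ.filter (Lmin σ)).filter fun m => Odd (cntb (fstart σ) ε m)).card := by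
  unfold numOddFactors
  rw [Nat.card_congr (Equiv.subtypeEquivRight
    (q := fun m => Lmin σ m ∧ Odd (cntb (fstart σ) ε m)) (fun m => ?_))]
  · rw [ncard_filter, ← filter_filter]
  · constructor
    · rintro ⟨h1, h2⟩
      have hL := (isLRMin_toW σ ε m).mp h1
      rw [barredCount_toW σ ε hL] at h2
      exact ⟨hL, h2⟩
    · rintro ⟨h1, h2⟩
      rw [← barredCount_toW σ ε h1] at h2
      exact ⟨(isLRMin_toW σ ε m).mpr h1, h2⟩

lemma numEven_toW (σ : Equiv.Perm (Fin n)) (ε : Fin n → Bool) :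
    numEvenFactors (toW σ ε)
      = ((univ.filter (Lmin σ)).filter fun m => Even (cntb (fstart σ) ε m)).card := by
  unfold numEvenFactors
  rw [Nat.card_congr (Equiv.subtypeEquivRight
    (q := fun m => Lmin σ m ∧ Even (cntb (fstart σ) ε m)) (fun m => ?_))]
  · rw [ncard_filter, ← filter_filter]
  · constructor
    · rintro ⟨h1, h2⟩
      have hL := (isLRMin_toW σ ε m).mp h1
      rw [barredCount_toW σ ε hL] at h2
      exact ⟨hL, h2⟩
    · rintro ⟨h1, h2⟩
      rw [← barredCount_toW σ ε h1] at h2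
      exact ⟨(isLRMin_toW σ ε m).mpr h1, h2⟩

end FinSide

section Main

variable {n : ℕ}

def absF (w : Fin n → ℤ) (hw : IsSignedPerm w) : Fin n → Fin n :=
  fun t => ⟨(w t).natAbs - 1, by
    have h1 := (hw.1 t).1
    have h2 := (hw.1 t).2
    omega⟩

lemma absF_injective (w : Fin n → ℤ) (hw : IsSignedPerm w) :
    Function.Injective (absF w hw) := by
  intro a b hab
  have h1 := (hw.1 a).1
  have h2 := (hw.1 b).1
  have hval : (w a).natAbs - 1 = (w b).natAbs - 1 := congrArg Fin.val hab
  exact hw.2 (show (w a).natAbs = (w b).natAbs by omega)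

noncomputable def permOf (w : Fin n → ℤ) (hw : IsSignedPerm w) : Equiv.Perm (Fin n) :=
  Equiv.ofBijective (absF w hw) (Finite.injective_iff_bijective.mp (absF_injective w hw))

noncomputable def E (n : ℕ) :
    {w : Fin n → ℤ // IsSignedPerm w} ≃ Equiv.Perm (Fin n) × (Fin n → Bool) where
  toFun x := (permOf x.1 x.2, fun t => decide (x.1 t < 0))
  invFun y := ⟨toW y.1 y.2, isSignedPerm_toW y.1 y.2⟩
  left_inv := by
    rintro ⟨w, hw⟩
    apply Subtype.ext
    funext t
    show toW (permOf w hw) (fun t => decide (w t < 0)) t = w t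
    unfold toW
    have hval : ((permOf w hw t : ℕ)) = (w t).natAbs - 1 := rfl
    have h1 := (hw.1 t).1
    by_cases hneg : w t < 0
    · rw [if_pos (decide_eq_true hneg), hval]
      omega
    · rw [if_neg (by simpa using hneg), hval]
      omega
  right_inv := by
    rintro ⟨σ, ε⟩
    refine Prod.ext ?_ ?_
    · apply Equiv.ext
      intro t
      apply Fin.ext
      show (toW σ ε t).natAbs - 1 = (σ t : ℕ)
      rw [toW_natAbs]
      omega
    · funext t
      show decide (toW σ ε t < 0) = ε t
      cases hε : ε t <;> simp [toW_neg_iff, hε]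

theorem bigC_eq_aux (n k kb : ℕ) :
    bigC n k kb
      = (univ.filter fun σ : Equiv.Perm (Fin n) =>
          (univ.filter (Lmin σ)).card = k + kb).card
        * ((k + kb).choose k * 2 ^ (n - (k + kb))) := by
  classical
  have hiff : ∀ x : {w : Fin n → ℤ // IsSignedPerm w},
      (numOddFactors x.1 = k ∧ numEvenFactors x.1 = kb) ↔
      (((univ.filter (Lmin ((E n) x).1)).filter
          fun m => Odd (cntb (fstart ((E n) x).1) ((E n) x).2 m)).card = k ∧
        ((univ.filter (Lmin ((E n) x).1)).filter
          fun m => Even (cntb (fstart ((E n) x).1) ((E n) x).2 m)).card = kb) := by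
    intro x
    have hx : x.1 = toW ((E n) x).1 ((E n) x).2 := by
      conv_lhs => rw [← (E n).symm_apply_apply x]
      rfl
    rw [hx, numOdd_toW, numEven_toW]
  unfold bigC
  rw [← Nat.card_congr (Equiv.subtypeSubtypeEquivSubtypeInter (IsSignedPerm (n := n))
    (fun w => numOddFactors w = k ∧ numEvenFactors w = kb))]
  rw [Nat.card_congr (Equiv.subtypeEquiv
    (q := fun y : Equiv.Perm (Fin n) × (Fin n → Bool) =>
      ((univ.filter (Lmin y.1)).filter fun m => Odd (cntb (fstart y.1) y.2 m)).card = k ∧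
      ((univ.filter (Lmin y.1)).filter fun m => Even (cntb (fstart y.1) y.2 m)).card = kb)
    (E n) hiff)]
  rw [Nat.card_congr (Equiv.subtypeProdEquivSigmaSubtype
    (fun (σ : Equiv.Perm (Fin n)) (ε : Fin n → Bool) =>
      ((univ.filter (Lmin σ)).filter fun m => Odd (cntb (fstart σ) ε m)).card = k ∧
      ((univ.filter (Lmin σ)).filter fun m => Even (cntb (fstart σ) ε m)).card = kb))]
  rw [Nat.card_eq_fintype_card, Fintype.card_sigma]
  have hterm : ∀ σ : Equiv.Perm (Fin n),
      Fintype.card {ε : Fin n → Bool //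
        ((univ.filter (Lmin σ)).filter fun m => Odd (cntb (fstart σ) ε m)).card = k ∧
        ((univ.filter (Lmin σ)).filter fun m => Even (cntb (fstart σ) ε m)).card = kb}
      = if (univ.filter (Lmin σ)).card = k + kb
        then (k + kb).choose k * 2 ^ (n - (k + kb)) else 0 := by
    intro σ
    rw [← Nat.card_eq_fintype_card]
    have := abstract_count (univ.filter (Lmin σ)) (fstart σ)
      (fun m hm => fstart_fix σ (mem_filter.mp hm).2) k kb
    rw [this, Fintype.card_fin]
  calc ∑ σ : Equiv.Perm (Fin n), _ = ∑ σ : Equiv.Perm (Fin n),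
      if (univ.filter (Lmin σ)).card = k + kb
      then (k + kb).choose k * 2 ^ (n - (k + kb)) else 0 := by
        exact Finset.sum_congr rfl (fun σ _ => hterm σ)
    _ = _ := by
        rw [← Finset.sum_filter]
        rw [Finset.sum_const, smul_eq_mul]

lemma littleC_eq (n j : ℕ) :
    littleC n j = (univ.filter fun σ : Equiv.Perm (Fin n) =>
      (univ.filter (Lmin σ)).card = j).card := by
  unfold littleC
  have h : ∀ σ : Equiv.Perm (Fin n),
      Nat.card {t : Fin n // ∀ s, s < t → σ t < σ s} = (univ.filter (Lmin σ)).card :=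
    fun σ => ncard_filter (Lmin σ)
  rw [Nat.card_congr (Equiv.subtypeEquivRight (fun σ => by rw [h σ]))]
  exact ncard_filter _

end Main

/-- `C(n, k, k̄) = 2^{n−k−k̄} · c(n, k+k̄) · binom(k+k̄, k)` whenever
`k + k̄ ≤ n`. -/
theorem bigC_eq_two_pow_mul_littleC_mul_choose (n k kb : ℕ) (h : k + kb ≤ n) :
    bigC n k kb = 2 ^ (n - k - kb) * littleC n (k + kb) * Nat.choose (k + kb) k := by
  rw [bigC_eq_aux n k kb, littleC_eq n (k + kb), Nat.sub_sub]
  ring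
end
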